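/- arXiv:1312.3798 — 7 statements merged into one kernel-verified Lean document; each statement's English description precedes it below -/
import Mathlib

section
/- Let α₁, α₂ ∈ ℝ be incommensurable, i.e. α₁ℤ ∩ α₂ℤ = {0}. Then every function f : ℝ → ℝ satisfying Δ_{α₁}Δ_{α₂} f = 0 can be written as f = f₁ + f₂ where f₁ is α₁-periodic and f₂ is α₂-periodic. -/
def deltaOp (α : ℝ) (f : ℝ → ℝ) : ℝ → ℝ := fun x => f (x + α) - f x

namespace Stmt0Aux

def mySetoid (α₁ α₂ : ℝ) : Setoid ℝ where
  r x y := ∃ m k : ℤ, y = x + m * α₁ + k * α₂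
  iseqv := by
    constructor
    · intro x; exact ⟨0, 0, by push_cast; ring⟩
    · rintro x y ⟨m, k, rfl⟩; exact ⟨-m, -k, by push_cast; ring⟩
    · rintro x y z ⟨m, k, rfl⟩ ⟨m', k', rfl⟩
      exact ⟨m + m', k + k', by push_cast; ring⟩

noncomputable def R (α₁ α₂ : ℝ) (x : ℝ) : ℝ := (Quotient.mk (mySetoid α₁ α₂) x).out

lemma R_rel (α₁ α₂ x : ℝ) : ∃ m k : ℤ, x = R α₁ α₂ x + m * α₁ + k * α₂ :=
  Quotient.mk_out (s := mySetoid α₁ α₂) x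

lemma R_eq (α₁ α₂ x y : ℝ) (h : ∃ m k : ℤ, y = x + m * α₁ + k * α₂) :
    R α₁ α₂ x = R α₁ α₂ y := by
  unfold R
  congr 1
  exact Quotient.sound h

noncomputable def T (α₂ : ℝ) (g : ℝ → ℝ) (k : ℤ) (y : ℝ) : ℝ :=
  (∑ j ∈ Finset.range k.toNat, g (y + j * α₂)) -
  (∑ j ∈ Finset.range (-k).toNat, g (y - (j + 1) * α₂))

lemma T_succ (α₂ : ℝ) (g : ℝ → ℝ) (k : ℤ) (y : ℝ) :
    T α₂ g (k + 1) y = T α₂ g k y + g (y + k * α₂) := by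
  rcases le_or_gt 0 k with hk | hk
  · have h1 : (k + 1).toNat = k.toNat + 1 := by omega
    have h2 : (-(k + 1)).toNat = 0 := by omega
    have h3 : (-k).toNat = 0 := by omega
    rw [T, T, h1, h2, h3, Finset.sum_range_succ]
    have : ((k.toNat : ℝ)) = (k : ℝ) := by exact_mod_cast Int.toNat_of_nonneg hk
    rw [this]; simp
  · have h1 : (k + 1).toNat = 0 := by omega
    have h0 : k.toNat = 0 := by omega
    have h3 : (-k).toNat = (-(k + 1)).toNat + 1 := by omega
    have hc : ((-(k + 1)).toNat : ℝ) + 1 = -(k : ℝ) := by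
      have h4 : ((-(k + 1)).toNat : ℤ) + 1 = -k := by omega
      exact_mod_cast h4
    rw [T, T, h1, h0, h3, Finset.sum_range_succ, hc]
    rw [show y - -(k : ℝ) * α₂ = y + k * α₂ by ring]
    simp only [Finset.range_zero, Finset.sum_empty]
    ring

end Stmt0Aux

theorem stmt_0 (α₁ α₂ : ℝ)
    (hinc : {x : ℝ | ∃ m : ℤ, x = m * α₁} ∩ {x : ℝ | ∃ k : ℤ, x = k * α₂} = {0})
    (f : ℝ → ℝ) (hf : deltaOp α₁ (deltaOp α₂ f) = 0) :
    ∃ f₁ f₂ : ℝ → ℝ, (∀ x, f₁ (x + α₁) = f₁ x) ∧ (∀ x, f₂ (x + α₂) = f₂ x) ∧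
      ∀ x, f x = f₁ x + f₂ x := by
  classical
  rcases eq_or_ne α₁ 0 with rfl | hα₁
  · exact ⟨f, 0, fun x => by simp, fun x => rfl, fun x => by simp⟩
  rcases eq_or_ne α₂ 0 with rfl | hα₂
  · exact ⟨0, f, fun x => rfl, fun x => by simp, fun x => by simp⟩
  have key : ∀ m k : ℤ, (m : ℝ) * α₁ = k * α₂ → m = 0 ∧ k = 0 := by
    intro m k h
    have hmem : (m : ℝ) * α₁ ∈ ({0} : Set ℝ) := by
      rw [← hinc]; exact ⟨⟨m, rfl⟩, ⟨k, h⟩⟩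
    have hm0 : (m : ℝ) * α₁ = 0 := hmem
    have hm : m = 0 := by
      rcases mul_eq_zero.1 hm0 with h' | h'
      · exact_mod_cast h'
      · exact absurd h' hα₁
    have hk : k = 0 := by
      rw [hm0] at h
      rcases mul_eq_zero.1 h.symm with h' | h'
      · exact_mod_cast h'
      · exact absurd h' hα₂
    exact ⟨hm, hk⟩
  set g : ℝ → ℝ := deltaOp α₂ f with hg
  have hgper : ∀ x, g (x + α₁) = g x := by
    intro x
    have := congrFun hf x
    simpa [deltaOp, sub_eq_zero] using this
  have hgper' : ∀ (m : ℤ) (x : ℝ), g (x + m * α₁) = g x := by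
    intro m
    induction m using Int.induction_on with
    | zero => intro x; simp
    | succ n ih =>
        intro x
        have h2 := hgper (x + (n : ℝ) * α₁)
        have h1 := ih x
        push_cast at h1 ⊢
        rw [show x + ((n : ℝ) + 1) * α₁ = x + (n : ℝ) * α₁ + α₁ by ring, h2]
        exact h1
    | pred n ih =>
        intro x
        have h1 := ih x
        have h2 := hgper (x + (-(n : ℝ) - 1) * α₁)
        rw [show x + (-(n : ℝ) - 1) * α₁ + α₁ = x + -(n : ℝ) * α₁ by ring] at h2
        push_cast at h1 ⊢
        exact h2.symm.trans h1
  have uniq : ∀ (y : ℝ) (m k m' k' : ℤ),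
      y + (m : ℝ) * α₁ + k * α₂ = y + m' * α₁ + k' * α₂ → k = k' := by
    intro y m k m' k' h
    have : ((m - m' : ℤ) : ℝ) * α₁ = ((k' - k : ℤ) : ℝ) * α₂ := by push_cast; linarith
    have := (key _ _ this).2
    omega
  set R := Stmt0Aux.R α₁ α₂ with hR
  have hKex : ∀ x : ℝ, ∃ k m : ℤ, x = R x + m * α₁ + k * α₂ := by
    intro x
    obtain ⟨m, k, h⟩ := Stmt0Aux.R_rel α₁ α₂ x
    exact ⟨k, m, h⟩
  set K : ℝ → ℤ := fun x => (hKex x).choose with hKdef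
  have hKspec : ∀ x : ℝ, ∃ m : ℤ, x = R x + m * α₁ + K x * α₂ := fun x => (hKex x).choose_spec
  have hRα₁ : ∀ x, R (x + α₁) = R x :=
    fun x => (Stmt0Aux.R_eq α₁ α₂ x (x + α₁) ⟨1, 0, by push_cast; ring⟩).symm
  have hRα₂ : ∀ x, R (x + α₂) = R x :=
    fun x => (Stmt0Aux.R_eq α₁ α₂ x (x + α₂) ⟨0, 1, by push_cast; ring⟩).symm
  have hKα₁ : ∀ x, K (x + α₁) = K x := by
    intro x
    obtain ⟨m, hm⟩ := hKspec x
    obtain ⟨m', hm'⟩ := hKspec (x + α₁)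
    rw [hRα₁ x] at hm'
    refine uniq (R x) m' (K (x + α₁)) (m + 1) (K x) ?_
    push_cast
    linarith [hm, hm']
  have hKα₂ : ∀ x, K (x + α₂) = K x + 1 := by
    intro x
    obtain ⟨m, hm⟩ := hKspec x
    obtain ⟨m', hm'⟩ := hKspec (x + α₂)
    rw [hRα₂ x] at hm'
    refine uniq (R x) m' (K (x + α₂)) m (K x + 1) ?_
    push_cast
    linarith [hm, hm']
  set f₁ : ℝ → ℝ := fun x => Stmt0Aux.T α₂ g (K x) (R x) with hf₁
  refine ⟨f₁, fun x => f x - f₁ x, ?_, ?_, fun x => by ring⟩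
  · intro x
    simp only [hf₁, hKα₁ x, hRα₁ x]
  · intro x
    show f (x + α₂) - f₁ (x + α₂) = f x - f₁ x
    have hstep : f₁ (x + α₂) = f₁ x + g x := by
      simp only [hf₁, hKα₂ x, hRα₂ x, Stmt0Aux.T_succ]
      congr 1
      obtain ⟨m, hm⟩ := hKspec x
      conv_rhs => rw [hm]
      rw [show R x + (m : ℝ) * α₁ + (K x : ℝ) * α₂ = (R x + (K x : ℝ) * α₂) + m * α₁ by ring]
      exact (hgper' m _).symm
    have hgx : g x = f (x + α₂) - f x := rfl
    rw [hstep]; linarith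
end

section
/- Let n ≥ 1, let α₁, …, αₙ ∈ ℝ, and let f : ℝ → ℝ be a uniformly almost periodic function, i.e. f is bounded and continuous and the set of translates {x ↦ f(x + t) : t ∈ ℝ} is relatively compact in the supremum norm. If Δ_{α₁}⋯Δ_{αₙ} f = 0, then there exist continuous functions f₁, …, fₙ : ℝ → ℝ with fⱼ αⱼ-periodic for each j and f = f₁ + ⋯ + fₙ. -/
open BoundedContinuousFunction

noncomputable section

/-- Average of `u` over the window `[x, x+N)`. -/
noncomputable def avgW (u : ℕ →ᵇ ℝ) (N x : ℕ) : ℝ :=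
  (N : ℝ)⁻¹ * ∑ k ∈ Finset.range N, u (x + k)

lemma abs_avgW_le (u : ℕ →ᵇ ℝ) (N x : ℕ) : |avgW u N x| ≤ ‖u‖ := by
  rcases Nat.eq_zero_or_pos N with h | h
  · simp [avgW, h, norm_nonneg]
  · rw [avgW, abs_mul, abs_inv, Nat.abs_cast]
    calc (N : ℝ)⁻¹ * |∑ k ∈ Finset.range N, u (x + k)|
        ≤ (N : ℝ)⁻¹ * ∑ k ∈ Finset.range N, ‖u‖ := by
          gcongr
          exact (Finset.abs_sum_le_sum_abs _ _).trans (Finset.sum_le_sum fun k _ =>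
            u.norm_coe_le_norm _)
      _ = ‖u‖ := by
          rw [Finset.sum_const, Finset.card_range, nsmul_eq_mul]
          field_simp

lemma bddAbove_avgW (u : ℕ →ᵇ ℝ) (N : ℕ) : BddAbove (Set.range (avgW u N)) := by
  refine ⟨‖u‖, ?_⟩
  rintro y ⟨x, rfl⟩
  exact (le_abs_self _).trans (abs_avgW_le u N x)

/-- The sup over starting points of window averages. -/
noncomputable def supAvg (u : ℕ →ᵇ ℝ) (N : ℕ) : ℝ := ⨆ x : ℕ, avgW u N x

lemma avgW_le_supAvg (u : ℕ →ᵇ ℝ) (N x : ℕ) : avgW u N x ≤ supAvg u N :=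
  le_ciSup (bddAbove_avgW u N) x

lemma supAvg_le (u : ℕ →ᵇ ℝ) (N : ℕ) {C : ℝ} (h : ∀ x, avgW u N x ≤ C) :
    supAvg u N ≤ C := ciSup_le h

lemma neg_norm_le_supAvg (u : ℕ →ᵇ ℝ) (N : ℕ) : -‖u‖ ≤ supAvg u N :=
  le_trans (neg_le_of_abs_le (abs_avgW_le u N 0)) (avgW_le_supAvg u N 0)

lemma sum_window_le (u : ℕ →ᵇ ℝ) {N : ℕ} (hN : 0 < N) (x : ℕ) :
    ∑ k ∈ Finset.range N, u (x + k) ≤ (N : ℝ) * supAvg u N := by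
  have h := avgW_le_supAvg u N x
  rw [avgW] at h
  have hN' : (0:ℝ) < (N:ℝ) := by exact_mod_cast hN
  calc ∑ k ∈ Finset.range N, u (x + k)
      = (N : ℝ) * ((N : ℝ)⁻¹ * ∑ k ∈ Finset.range N, u (x + k)) := by
        field_simp
    _ ≤ (N : ℝ) * supAvg u N := by gcongr

lemma supAvg_mul_le (u : ℕ →ᵇ ℝ) {N M : ℕ} (hN : 0 < N) (hM : 0 < M) :
    supAvg u (N * M) ≤ supAvg u N := by
  refine supAvg_le u _ fun x => ?_
  rw [avgW]
  have key : ∀ m : ℕ, ∑ k ∈ Finset.range (N * m), u (x + k)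
      ≤ (m : ℝ) * ((N : ℝ) * supAvg u N) := by
    intro m
    induction m with
    | zero => simp
    | succ m ih =>
      rw [Nat.mul_succ, Finset.sum_range_add]
      push_cast
      have h2 : ∑ k ∈ Finset.range N, u (x + (N * m + k))
          ≤ (N : ℝ) * supAvg u N := by
        have := sum_window_le u hN (x + N * m)
        simpa [add_assoc] using this
      calc (∑ k ∈ Finset.range (N*m), u (x + k)) + ∑ k ∈ Finset.range N, u (x + (N * m + k))
          ≤ (m : ℝ) * ((N : ℝ) * supAvg u N) + (N : ℝ) * supAvg u N := add_le_add ih h2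
        _ = ((m : ℝ) + 1) * ((N : ℝ) * supAvg u N) := by ring
  have hNM : (0:ℝ) < ((N * M : ℕ) : ℝ) := by
    exact_mod_cast Nat.mul_pos hN hM
  rw [inv_mul_le_iff₀ hNM]
  calc ∑ k ∈ Finset.range (N * M), u (x + k)
      ≤ (M : ℝ) * ((N : ℝ) * supAvg u N) := key M
    _ = ((N * M : ℕ) : ℝ) * supAvg u N := by push_cast; ring

/-- The sublinear functional. -/
noncomputable def meanQ (u : ℕ →ᵇ ℝ) : ℝ := ⨅ N : ℕ, supAvg u (N + 1)

lemma bddBelow_meanQ (u : ℕ →ᵇ ℝ) : BddBelow (Set.range fun N : ℕ => supAvg u (N + 1)) := by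
  refine ⟨-‖u‖, ?_⟩
  rintro y ⟨N, rfl⟩
  exact neg_norm_le_supAvg u _

lemma meanQ_le_supAvg (u : ℕ →ᵇ ℝ) (N : ℕ) : meanQ u ≤ supAvg u (N + 1) :=
  ciInf_le (bddBelow_meanQ u) N

lemma meanQ_le_supAvg' (u : ℕ →ᵇ ℝ) {N : ℕ} (hN : 0 < N) : meanQ u ≤ supAvg u N := by
  obtain ⟨M, rfl⟩ := Nat.exists_eq_add_of_lt hN
  simpa [Nat.add_comm] using meanQ_le_supAvg u M

lemma supAvg_add_le (u v : ℕ →ᵇ ℝ) (N : ℕ) :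
    supAvg (u + v) N ≤ supAvg u N + supAvg v N := by
  refine supAvg_le _ _ fun x => ?_
  have : avgW (u + v) N x = avgW u N x + avgW v N x := by
    simp [avgW, Finset.sum_add_distrib, mul_add]
  rw [this]
  exact add_le_add (avgW_le_supAvg u N x) (avgW_le_supAvg v N x)

lemma meanQ_add (u v : ℕ →ᵇ ℝ) : meanQ (u + v) ≤ meanQ u + meanQ v := by
  rw [meanQ, meanQ]
  refine le_ciInf_add_ciInf fun N M => ?_
  have h1 : meanQ (u + v) ≤ supAvg (u + v) ((N+1) * (M+1)) :=
    meanQ_le_supAvg' _ (by positivity)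
  refine h1.trans ((supAvg_add_le u v _).trans (add_le_add ?_ ?_))
  · exact supAvg_mul_le u (Nat.succ_pos N) (Nat.succ_pos M)
  · rw [Nat.mul_comm]
    exact supAvg_mul_le v (Nat.succ_pos M) (Nat.succ_pos N)

lemma meanQ_smul (c : ℝ) (hc : 0 < c) (u : ℕ →ᵇ ℝ) : meanQ (c • u) = c * meanQ u := by
  have havg : ∀ N x, avgW (c • u) N x = c * avgW u N x := by
    intro N x
    simp only [avgW, BoundedContinuousFunction.coe_smul, Pi.smul_apply, smul_eq_mul,
      Finset.mul_sum]
    exact Finset.sum_congr rfl fun k _ => by ring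
  have hsup : ∀ N, supAvg (c • u) N = c * supAvg u N := by
    intro N
    rw [supAvg, supAvg, Real.mul_iSup_of_nonneg hc.le]
    exact iSup_congr fun x => havg N x
  rw [meanQ, meanQ, Real.mul_iInf_of_nonneg hc.le]
  exact iInf_congr fun N => hsup _

lemma meanQ_telescope (u w : ℕ →ᵇ ℝ) (h : ∀ k, w k = u (k + 1) - u k) :
    meanQ w ≤ 0 := by
  have hsup : ∀ N : ℕ, 0 < N → supAvg w N ≤ 2 * ‖u‖ / N := by
    intro N hN
    refine supAvg_le _ _ fun x => ?_
    have htel : ∑ k ∈ Finset.range N, w (x + k) = u (x + N) - u x := by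
      calc ∑ k ∈ Finset.range N, w (x + k)
          = ∑ k ∈ Finset.range N, (u (x + (k+1)) - u (x + k)) := by
            refine Finset.sum_congr rfl fun k _ => ?_
            rw [h (x + k), add_assoc]
        _ = u (x + N) - u (x + 0) := Finset.sum_range_sub (fun i => u (x + i)) N
        _ = u (x + N) - u x := by rw [add_zero]
    rw [avgW, htel, div_eq_inv_mul]
    gcongr
    have h1 : |u (x + N) - u x| ≤ 2 * ‖u‖ := by
      calc |u (x + N) - u x| ≤ |u (x+N)| + |u x| := abs_sub _ _
        _ ≤ ‖u‖ + ‖u‖ := add_le_add (u.norm_coe_le_norm _) (u.norm_coe_le_norm _)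
        _ = 2 * ‖u‖ := by ring
    exact (le_abs_self _).trans h1
  refine le_of_forall_pos_le_add fun ε hε => ?_
  obtain ⟨N, hN⟩ := exists_nat_gt (2 * ‖u‖ / ε)
  have h2 : 2 * ‖u‖ < (N : ℝ) * ε := by rwa [div_lt_iff₀ hε] at hN
  calc meanQ w ≤ supAvg w (N + 1) := meanQ_le_supAvg w N
    _ ≤ 2 * ‖u‖ / ((N : ℝ) + 1) := by
        have := hsup (N + 1) (Nat.succ_pos N)
        push_cast at this
        exact this
    _ ≤ ε := by
        rw [div_le_iff₀ (by positivity)]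
        nlinarith [hε.le, h2]
    _ = 0 + ε := (zero_add ε).symm

lemma meanQ_zero : meanQ 0 = 0 := by
  have : ∀ N, supAvg (0 : ℕ →ᵇ ℝ) N = 0 := by
    intro N
    rw [supAvg]
    have : ∀ x : ℕ, avgW 0 N x = 0 := fun x => by simp [avgW]
    simp [this]
  simp [meanQ, this]

/-- Existence of a shift-invariant mean on bounded sequences. -/
theorem exists_invariant_mean : ∃ m : (ℕ →ᵇ ℝ) →ₗ[ℝ] ℝ,
    (∀ (u : ℕ →ᵇ ℝ) (C : ℝ), (∀ k, u k ≤ C) → m u ≤ C) ∧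
    (∀ u v : ℕ →ᵇ ℝ, (∀ k, v k = u (k + 1)) → m v = m u) := by
  obtain ⟨g, -, hg⟩ := exists_extension_of_le_sublinear
    (⟨⊥, 0⟩ : (ℕ →ᵇ ℝ) →ₗ.[ℝ] ℝ) meanQ
    (fun c hc x => meanQ_smul c hc x)
    (fun x y => meanQ_add x y)
    (fun x => by
      have hx : (x : ℕ →ᵇ ℝ) = 0 := by
        exact (Submodule.mem_bot ℝ).mp x.2
      simp [hx, meanQ_zero])
  have key : ∀ (u : ℕ →ᵇ ℝ) (C : ℝ), (∀ k, u k ≤ C) → g u ≤ C := by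
    intro u C h
    have h1 : supAvg u 1 ≤ C := by
      refine supAvg_le u 1 fun x => ?_
      simp [avgW]
      simpa using h x
    exact (hg u).trans ((meanQ_le_supAvg' u one_pos).trans h1)
  refine ⟨g, key, fun u v h => ?_⟩
  have h1 : g (v - u) ≤ 0 := (hg _).trans (meanQ_telescope u (v - u) (fun k => by
    simp [h k]))
  have h2 : g (u - v) ≤ 0 := (hg _).trans (meanQ_telescope (-u) (u - v) (fun k => by
    simp [h k]; ring))
  have e1 : g (v - u) = g v - g u := by rw [map_sub]
  have e2 : g (u - v) = g u - g v := by rw [map_sub]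
  linarith [h1, h2, e1.symm.le, e2.symm.le]

open scoped Classical in
/-- The sequence `k ↦ h (x + k * α)` as a bounded function (junk value if `h` unbounded). -/
noncomputable def seqOf (h : ℝ → ℝ) (α x : ℝ) : ℕ →ᵇ ℝ :=
  if hb : ∃ C : ℝ, ∀ y, |h y| ≤ C then
    BoundedContinuousFunction.ofNormedAddCommGroupDiscrete
      (fun k : ℕ => h (x + k * α)) hb.choose
      (fun k => by simpa [Real.norm_eq_abs] using hb.choose_spec (x + k * α))
  else 0

lemma seqOf_apply {h : ℝ → ℝ} (hb : ∃ C, ∀ y, |h y| ≤ C) (α x : ℝ) (k : ℕ) :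
    seqOf h α x k = h (x + k * α) := by
  rw [seqOf, dif_pos hb]
  rfl

variable (m : (ℕ →ᵇ ℝ) →ₗ[ℝ] ℝ)

/-- Averaging operator along the arithmetic progression `x + kα`. -/
noncomputable def Aop (α : ℝ) (h : ℝ → ℝ) : ℝ → ℝ := fun x => m (seqOf h α x)

section Aop

variable {m} (hm_le : ∀ (u : ℕ →ᵇ ℝ) (C : ℝ), (∀ k, u k ≤ C) → m u ≤ C)
  (hm_shift : ∀ u v : ℕ →ᵇ ℝ, (∀ k, v k = u (k + 1)) → m v = m u)

include hm_le in
lemma Aop_abs_le {h : ℝ → ℝ} (hb : ∃ C, ∀ y, |h y| ≤ C) {C : ℝ}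
    (hC : ∀ y, |h y| ≤ C) (α x : ℝ) : |Aop m α h x| ≤ C := by
  rw [abs_le]
  constructor
  · have h2 : m (-(seqOf h α x)) ≤ C := hm_le _ C fun k => by
      simp only [BoundedContinuousFunction.coe_neg, Pi.neg_apply, seqOf_apply hb]
      exact neg_le.mpr (abs_le.mp (hC _)).1
    rw [map_neg] at h2
    show -C ≤ m (seqOf h α x)
    linarith
  · exact hm_le _ C fun k => by rw [seqOf_apply hb]; exact (abs_le.mp (hC _)).2

include hm_shift in
lemma Aop_periodic {h : ℝ → ℝ} (hb : ∃ C, ∀ y, |h y| ≤ C) (α x : ℝ) :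
    Aop m α h (x + α) = Aop m α h x := by
  refine hm_shift _ _ fun k => ?_
  rw [seqOf_apply hb, seqOf_apply hb]
  push_cast
  ring_nf

include hm_le in
lemma Aop_const_eq {c : ℝ} {u : ℕ →ᵇ ℝ} (hu : ∀ k, u k = c) : m u = c := by
  have h1 : m u ≤ c := hm_le u c fun k => (hu k).le
  have h2 : m (-u) ≤ -c := hm_le (-u) (-c) fun k => by simp [hu k]
  rw [map_neg] at h2
  linarith

include hm_le in
lemma Aop_fixed {α : ℝ} {h : ℝ → ℝ} (hb : ∃ C, ∀ y, |h y| ≤ C)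
    (hper : ∀ y, h (y + α) = h y) (x : ℝ) : Aop m α h x = h x := by
  refine Aop_const_eq hm_le fun k => ?_
  rw [seqOf_apply hb]
  induction k with
  | zero => simp
  | succ k ihk =>
    have : x + ((k : ℝ) + 1) * α = (x + k * α) + α := by ring
    push_cast
    rw [this, hper, ihk]

include hm_le in
lemma Aop_uc {h : ℝ → ℝ} (hb : ∃ C, ∀ y, |h y| ≤ C) (huc : UniformContinuous h) (α : ℝ) :
    UniformContinuous (Aop m α h) := by
  rw [Metric.uniformContinuous_iff] at huc ⊢
  intro ε hε
  obtain ⟨δ, hδ, hδ'⟩ := huc (ε / 2) (by linarith)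
  refine ⟨δ, hδ, fun {x y} hxy => ?_⟩
  have key : ∀ k : ℕ, |h (x + k * α) - h (y + k * α)| ≤ ε / 2 := by
    intro k
    have : dist (x + k * α) (y + k * α) < δ := by
      rw [Real.dist_eq] at hxy ⊢
      simpa [add_sub_add_right_eq_sub] using hxy
    have := hδ' this
    rw [Real.dist_eq] at this
    exact this.le
  have hsub : ∀ k : ℕ, (seqOf h α x - seqOf h α y) k = h (x + k * α) - h (y + k * α) := by
    intro k
    simp [seqOf_apply hb]
  have h1 : m (seqOf h α x - seqOf h α y) ≤ ε / 2 :=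
    hm_le _ _ fun k => by rw [hsub k]; exact (abs_le.mp (key k)).2
  have h2 : m (-(seqOf h α x - seqOf h α y)) ≤ ε / 2 :=
    hm_le _ _ fun k => by
      simp only [BoundedContinuousFunction.coe_neg, Pi.neg_apply, hsub k]
      exact neg_le.mpr (abs_le.mp (key k)).1
  rw [map_neg] at h2
  rw [map_sub] at h1 h2
  have : dist (Aop m α h x) (Aop m α h y) = |m (seqOf h α x) - m (seqOf h α y)| :=
    Real.dist_eq _ _
  rw [this, abs_lt]
  constructor <;> linarith

lemma deltaOp_bounded {h : ℝ → ℝ} (hb : ∃ C, ∀ y, |h y| ≤ C) (β : ℝ) :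
    ∃ C, ∀ y, |deltaOp β h y| ≤ C := by
  obtain ⟨C, hC⟩ := hb
  refine ⟨2 * C, fun y => ?_⟩
  calc |h (y + β) - h y| ≤ |h (y + β)| + |h y| := abs_sub _ _
    _ ≤ 2 * C := by linarith [hC (y + β), hC y]

include hm_le in
lemma Aop_delta {h : ℝ → ℝ} (hb : ∃ C, ∀ y, |h y| ≤ C) (α β : ℝ) :
    Aop m α (deltaOp β h) = deltaOp β (Aop m α h) := by
  have hb2 := deltaOp_bounded hb β
  funext x
  have hEq : seqOf (deltaOp β h) α x = seqOf h α (x + β) - seqOf h α x := by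
    ext k
    simp only [BoundedContinuousFunction.coe_sub, Pi.sub_apply,
      seqOf_apply hb2, seqOf_apply hb, deltaOp]
    ring_nf
  show m (seqOf (deltaOp β h) α x) = m (seqOf h α (x + β)) - m (seqOf h α x)
  rw [hEq, map_sub]

lemma foldr_deltaOp_bounded {h : ℝ → ℝ} (hb : ∃ C, ∀ y, |h y| ≤ C) (l : List ℝ) :
    ∃ C, ∀ y, |(List.foldr deltaOp h l) y| ≤ C := by
  induction l with
  | nil => exact hb
  | cons a l ih => exact deltaOp_bounded ih a

lemma foldr_deltaOp_sub (h₁ h₂ : ℝ → ℝ) (l : List ℝ) :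
    List.foldr deltaOp (h₁ - h₂) l = List.foldr deltaOp h₁ l - List.foldr deltaOp h₂ l := by
  induction l with
  | nil => rfl
  | cons a l ih =>
    simp only [List.foldr_cons, ih]
    funext x
    simp [deltaOp]
    ring

include hm_le in
lemma Aop_foldr {h : ℝ → ℝ} (hb : ∃ C, ∀ y, |h y| ≤ C) (α : ℝ) (l : List ℝ) :
    List.foldr deltaOp (Aop m α h) l = Aop m α (List.foldr deltaOp h l) := by
  induction l with
  | nil => rfl
  | cons a l ih =>
    simp only [List.foldr_cons, ih]
    rw [Aop_delta hm_le (foldr_deltaOp_bounded hb l) α a]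

end Aop

theorem key_decomp (m : (ℕ →ᵇ ℝ) →ₗ[ℝ] ℝ)
    (hm_le : ∀ (u : ℕ →ᵇ ℝ) (C : ℝ), (∀ k, u k ≤ C) → m u ≤ C)
    (hm_shift : ∀ u v : ℕ →ᵇ ℝ, (∀ k, v k = u (k + 1)) → m v = m u) :
    ∀ (n : ℕ) (α : Fin n → ℝ) (f : ℝ → ℝ), UniformContinuous f →
      (∃ C, ∀ x, |f x| ≤ C) → List.foldr deltaOp f (List.ofFn α) = 0 →
      ∃ g : Fin n → ℝ → ℝ, (∀ j, UniformContinuous (g j)) ∧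
        (∀ j x, g j (x + α j) = g j x) ∧ ∀ x, f x = ∑ j, g j x := by
  intro n
  induction n with
  | zero =>
    intro α f _ _ hdiff
    refine ⟨Fin.elim0, fun j => j.elim0, fun j => j.elim0, fun x => ?_⟩
    have : f = 0 := by simpa using hdiff
    simp [this]
  | succ n ih =>
    intro α f huc hb hdiff
    rw [List.ofFn_succ, List.foldr_cons] at hdiff
    set F := List.foldr deltaOp f (List.ofFn fun i : Fin n => α i.succ) with hF
    have hFper : ∀ x, F (x + α 0) = F x := by
      intro x
      have := congrFun hdiff x
      simpa [deltaOp, sub_eq_zero] using this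
    have hFb : ∃ C, ∀ y, |F y| ≤ C := foldr_deltaOp_bounded hb _
    set A := Aop m (α 0) f with hA
    obtain ⟨C, hC⟩ := hb
    have hb' : ∃ C, ∀ x, |f x| ≤ C := ⟨C, hC⟩
    have hAuc : UniformContinuous A := Aop_uc hm_le hb' huc (α 0)
    have hAb : ∀ x, |A x| ≤ C := fun x => Aop_abs_le hm_le hb' hC (α 0) x
    have hAper : ∀ x, A (x + α 0) = A x := fun x => Aop_periodic hm_shift hb' (α 0) x
    have hkey : List.foldr deltaOp (f - A) (List.ofFn fun i : Fin n => α i.succ) = 0 := by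
      rw [foldr_deltaOp_sub]
      rw [← hF]
      rw [hA, Aop_foldr hm_le hb' (α 0), ← hF]
      funext x
      have := Aop_fixed (α := α 0) hm_le hFb hFper x
      simp [this]
    have hsubuc : UniformContinuous (f - A) := huc.sub hAuc
    have hsubb : ∃ C', ∀ x, |(f - A) x| ≤ C' := by
      refine ⟨2 * C, fun x => ?_⟩
      calc |f x - A x| ≤ |f x| + |A x| := abs_sub _ _
        _ ≤ 2 * C := by linarith [hC x, hAb x]
    obtain ⟨g', hg'uc, hg'per, hg'sum⟩ := ih (fun i => α i.succ) (f - A) hsubuc hsubb hkey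
    refine ⟨Fin.cons A g', ?_, ?_, ?_⟩
    · intro j
      refine Fin.cases ?_ ?_ j
      · simpa using hAuc
      · intro i; simpa using hg'uc i
    · intro j
      refine Fin.cases ?_ ?_ j
      · intro x; simpa using hAper x
      · intro i x; simpa using hg'per i x
    · intro x
      rw [Fin.sum_univ_succ]
      simp only [Fin.cons_zero, Fin.cons_succ]
      have := hg'sum x
      simp only [Pi.sub_apply] at this
      linarith [this]

lemma uc_of_compact_orbit (f : ℝ → ℝ) (hcont : Continuous f) {C : ℝ} (hC : ∀ x, |f x| ≤ C)
    (hcpt : IsCompact (closure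
      {g : BoundedContinuousFunction ℝ ℝ | ∃ t : ℝ, ∀ x, g x = f (x + t)})) :
    UniformContinuous f := by
  set S := {g : BoundedContinuousFunction ℝ ℝ | ∃ t : ℝ, ∀ x, g x = f (x + t)} with hS
  -- the translate of `f` by `t`, as a bounded continuous function
  have hcont' : ∀ t : ℝ, Continuous fun z => f (z + t) :=
    fun t => hcont.comp (continuous_add_right t)
  set T : ℝ → BoundedContinuousFunction ℝ ℝ := fun t =>
    BoundedContinuousFunction.ofNormedAddCommGroup (fun z => f (z + t)) (hcont' t) C
      (fun z => by simpa [Real.norm_eq_abs] using hC (z + t)) with hT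
  have hTS : ∀ t, T t ∈ S := fun t => ⟨t, fun x => rfl⟩
  have hTapp : ∀ t z, T t z = f (z + t) := fun t z => rfl
  have htb : TotallyBounded S := (hcpt.totallyBounded).subset subset_closure
  -- suffices the ε-δ form
  rw [Metric.uniformContinuous_iff]
  intro ε hε
  obtain ⟨t, htfin, hcover⟩ := (Metric.totallyBounded_iff).mp htb (ε / 4) (by linarith)
  have hcont_at : ∀ y : BoundedContinuousFunction ℝ ℝ,
      ∃ δ > 0, ∀ z : ℝ, |z| < δ → |y z - y 0| < ε / 4 := by
    intro y
    have := Metric.continuousAt_iff.mp (y.continuous.continuousAt (x := 0)) (ε / 4) (by linarith)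
    obtain ⟨δ, hδ, hδ'⟩ := this
    exact ⟨δ, hδ, fun z hz => by
      have := hδ' (x := z) (by simpa [Real.dist_eq] using hz)
      simpa [Real.dist_eq] using this⟩
  choose δf hδf hδf' using hcont_at
  set tf := htfin.toFinset with htf
  have htne : tf.Nonempty := by
    rcases Finset.eq_empty_or_nonempty tf with h | h
    · exfalso
      have := hcover (hTS 0)
      simp only [Set.mem_iUnion] at this
      obtain ⟨y, hy, -⟩ := this
      have hmem : y ∈ tf := by simpa [htf] using hy
      rw [h] at hmem
      simp at hmem
    · exact h
  set δ := tf.inf' htne δf with hδdef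
  have hδpos : 0 < δ := by
    rw [hδdef, Finset.lt_inf'_iff]
    exact fun y _ => hδf y
  refine ⟨δ, hδpos, fun {a b} hab => ?_⟩
  -- write a = b + h
  have key : ∀ (x h : ℝ), |h| < δ → |f (x + h) - f x| < 3 * (ε / 4) := by
    intro x h hh
    have hTx := hcover (hTS x)
    simp only [Set.mem_iUnion] at hTx
    obtain ⟨y, hy, hball⟩ := hTx
    have hytf : y ∈ tf := by simpa [htf] using hy
    have hdist : dist (T x) y < ε / 4 := by simpa [Metric.mem_ball] using hball
    have h1 : |T x h - y h| < ε / 4 :=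
      lt_of_le_of_lt (by simpa [Real.dist_eq] using
        BoundedContinuousFunction.dist_coe_le_dist (f := T x) (g := y) h) hdist
    have h0 : |T x 0 - y 0| < ε / 4 :=
      lt_of_le_of_lt (by simpa [Real.dist_eq] using
        BoundedContinuousFunction.dist_coe_le_dist (f := T x) (g := y) 0) hdist
    have h2 : |y h - y 0| < ε / 4 := hδf' y h (lt_of_lt_of_le hh (Finset.inf'_le _ hytf))
    have e1 : T x h = f (x + h) := (hTapp x h).trans (by rw [add_comm])
    have e0 : T x 0 = f x := (hTapp x 0).trans (by rw [zero_add])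
    rw [e1] at h1
    rw [e0] at h0
    calc |f (x + h) - f x| = |(f (x+h) - y h) + (y h - y 0) + (y 0 - f x)| := by
          congr 1
          ring
      _ ≤ |f (x+h) - y h| + |y h - y 0| + |y 0 - f x| := by
          exact (abs_add_le _ _).trans (by gcongr; exact abs_add_le _ _)
      _ < ε/4 + ε/4 + ε/4 := by
          have h0' : |y 0 - f x| < ε / 4 := by rwa [abs_sub_comm]
          gcongr
      _ = 3 * (ε / 4) := by ring
  have := key b (a - b) (by rwa [Real.dist_eq] at hab)
  rw [Real.dist_eq]
  have e : b + (a - b) = a := by ring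
  rw [e] at this
  linarith

end

theorem stmt_2 (n : ℕ) (hn : 1 ≤ n) (α : Fin n → ℝ) (f : ℝ → ℝ)
    (hcont : Continuous f) (hbdd : ∃ C : ℝ, ∀ x, |f x| ≤ C)
    (hcpt : IsCompact (closure
      {g : BoundedContinuousFunction ℝ ℝ | ∃ t : ℝ, ∀ x, g x = f (x + t)}))
    (hdiff : (List.ofFn α).foldr deltaOp f = 0) :
    ∃ g : Fin n → ℝ → ℝ, (∀ j, Continuous (g j)) ∧ (∀ j x, g j (x + α j) = g j x) ∧
      ∀ x, f x = ∑ j, g j x := by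
  obtain ⟨C, hC⟩ := hbdd
  have huc := uc_of_compact_orbit f hcont hC hcpt
  obtain ⟨m, hm_le, hm_shift⟩ := exists_invariant_mean
  obtain ⟨g, hguc, hgper, hgsum⟩ := key_decomp m hm_le hm_shift n α f huc ⟨C, hC⟩ hdiff
  exact ⟨g, fun j => (hguc j).continuous, hgper, hgsum⟩
end

section
/- Let n ≥ 1, let α₁, …, αₙ ∈ ℝ, and let f : ℝ → ℝ be bounded and continuous. If Δ_{α₁}⋯Δ_{αₙ} f = 0, then there exist bounded continuous functions f₁, …, fₙ : ℝ → ℝ with fⱼ αⱼ-periodic for each j and f = f₁ + ⋯ + fₙ. In other words, the space BC(ℝ) of bounded continuous real functions has the decomposition property. -/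
namespace PD

open Filter Function

noncomputable def U : Ultrafilter ℕ := Ultrafilter.of Filter.atTop

lemma U_le : (U : Filter ℕ) ≤ Filter.atTop := Ultrafilter.of_le _

open scoped Classical in
noncomputable def ulim (u : ℕ → ℝ) : ℝ :=
  if h : ∃ L, Filter.Tendsto u (U : Filter ℕ) (nhds L) then h.choose else 0

lemma ulim_eq {u : ℕ → ℝ} {L : ℝ} (h : Filter.Tendsto u (U : Filter ℕ) (nhds L)) :
    ulim u = L := by
  have hex : ∃ L, Filter.Tendsto u (U : Filter ℕ) (nhds L) := ⟨L, h⟩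
  classical
  rw [ulim]
  rw [dif_pos hex]
  exact tendsto_nhds_unique hex.choose_spec h

lemma tendsto_ulim {u : ℕ → ℝ} {M : ℝ} (hb : ∀ n, |u n| ≤ M) :
    Filter.Tendsto u (U : Filter ℕ) (nhds (ulim u)) := by
  have h1 : (U.map u : Filter ℝ) ≤ Filter.principal (Set.Icc (-M) M) := by
    rw [Filter.le_principal_iff]
    have : ∀ n, u n ∈ Set.Icc (-M) M := fun n => abs_le.1 (hb n)
    exact Filter.mem_map.2 (Filter.univ_mem' this)
  obtain ⟨a, -, ha⟩ := (isCompact_Icc (a := -M) (b := M)).ultrafilter_le_nhds (U.map u) h1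
  have : Filter.Tendsto u (U : Filter ℕ) (nhds a) := ha
  rwa [ulim_eq this]

lemma abs_ulim_le {u : ℕ → ℝ} {M : ℝ} (hb : ∀ n, |u n| ≤ M) : |ulim u| ≤ M := by
  have := tendsto_ulim hb
  have habs : Filter.Tendsto (fun n => |u n|) (U : Filter ℕ) (nhds |ulim u|) := this.abs
  exact le_of_tendsto habs (Filter.Eventually.of_forall hb)

lemma ulim_add {u v : ℕ → ℝ} {M M' : ℝ} (hu : ∀ n, |u n| ≤ M) (hv : ∀ n, |v n| ≤ M') :
    ulim (fun n => u n + v n) = ulim u + ulim v :=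
  ulim_eq ((tendsto_ulim hu).add (tendsto_ulim hv))

lemma ulim_sub {u v : ℕ → ℝ} {M M' : ℝ} (hu : ∀ n, |u n| ≤ M) (hv : ∀ n, |v n| ≤ M') :
    ulim (fun n => u n - v n) = ulim u - ulim v :=
  ulim_eq ((tendsto_ulim hu).sub (tendsto_ulim hv))

lemma ulim_of_tendsto {u : ℕ → ℝ} {L : ℝ} (h : Filter.Tendsto u Filter.atTop (nhds L)) :
    ulim u = L := ulim_eq (h.mono_left U_le)

/-- If `u` is bounded and `e → 0` along `atTop`, then `ulim (u + e) = ulim u`. -/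
lemma ulim_add_tendsto_zero {u e : ℕ → ℝ} {M : ℝ} (hu : ∀ n, |u n| ≤ M)
    (he : Filter.Tendsto e Filter.atTop (nhds 0)) :
    ulim (fun n => u n + e n) = ulim u := by
  have := (tendsto_ulim hu).add (he.mono_left U_le)
  rw [add_zero] at this
  exact ulim_eq this

lemma abs_avg_le {w : ℕ → ℝ} {M : ℝ} (hM : ∀ k, |w k| ≤ M) (N : ℕ) :
    |(∑ k ∈ Finset.range N, w k) / (N : ℝ)| ≤ M := by
  have hM0 : 0 ≤ M := le_trans (abs_nonneg _) (hM 0)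
  rcases Nat.eq_zero_or_pos N with h | h
  · subst h; simpa using hM0
  · have hN : (0:ℝ) < N := by exact_mod_cast h
    rw [abs_div, abs_of_pos hN, div_le_iff₀ hN]
    calc |∑ k ∈ Finset.range N, w k| ≤ ∑ k ∈ Finset.range N, |w k| :=
          Finset.abs_sum_le_sum_abs _ _
      _ ≤ ∑ _k ∈ Finset.range N, M := Finset.sum_le_sum (fun k _ => hM k)
      _ = M * N := by rw [Finset.sum_const, Finset.card_range]; ring

/-- Cesàro–ultrafilter mean along the orbit `x, x+b, x+2b, …`. -/
noncomputable def mean (b : ℝ) (g : ℝ → ℝ) (x : ℝ) : ℝ :=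
  ulim (fun N => (∑ k ∈ Finset.range N, g (x + (k : ℝ) * b)) / (N : ℝ))

lemma abs_mean_le {b : ℝ} {g : ℝ → ℝ} {M : ℝ} (hb : ∀ x, |g x| ≤ M) (x : ℝ) :
    |mean b g x| ≤ M :=
  abs_ulim_le (fun N => abs_avg_le (fun k => hb _) N)

lemma mean_translate (b t : ℝ) (g : ℝ → ℝ) (x : ℝ) :
    mean b (fun y => g (y + t)) x = mean b g (x + t) := by
  unfold mean
  congr 1
  funext N
  congr 1
  exact Finset.sum_congr rfl (fun k _ => by ring_nf)

lemma mean_sub {b : ℝ} {u v : ℝ → ℝ} {M M' : ℝ} (hu : ∀ x, |u x| ≤ M)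
    (hv : ∀ x, |v x| ≤ M') (x : ℝ) :
    mean b (fun y => u y - v y) x = mean b u x - mean b v x := by
  unfold mean
  rw [← ulim_sub (u := fun N => (∑ k ∈ Finset.range N, u (x + (k:ℝ) * b)) / (N:ℝ))
      (fun N => abs_avg_le (fun k => hu _) N) (fun N => abs_avg_le (fun k => hv _) N)]
  congr 1
  funext N
  rw [← sub_div, ← Finset.sum_sub_distrib]

/-- The mean along `b` is `b`-periodic. -/
lemma mean_periodic_b {b : ℝ} {g : ℝ → ℝ} {M : ℝ} (hb : ∀ x, |g x| ≤ M) :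
    Function.Periodic (mean b g) b := by
  intro x
  unfold mean
  have key : ∀ N : ℕ, (∑ k ∈ Finset.range N, g (x + b + (k:ℝ) * b)) / (N:ℝ)
      = (∑ k ∈ Finset.range N, g (x + (k:ℝ) * b)) / (N:ℝ)
        + (g (x + (N:ℝ) * b) - g x) / (N:ℝ) := by
    intro N
    have h1 : ∀ k : ℕ, g (x + b + (k:ℝ) * b) = g (x + ((k:ℕ) + 1 : ℝ) * b) := by
      intro k; congr 1; ring
    rw [Finset.sum_congr rfl (fun k _ => h1 k)]
    have h2 : (∑ k ∈ Finset.range N, g (x + ((k : ℝ) + 1) * b))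
        = (∑ k ∈ Finset.range N, g (x + (k:ℝ) * b)) + g (x + (N:ℝ) * b) - g x := by
      induction N with
      | zero => simp
      | succ n ih =>
          rw [Finset.sum_range_succ, ih, Finset.sum_range_succ]
          push_cast
          ring
    rw [h2]
    ring
  have : (fun N : ℕ => (∑ k ∈ Finset.range N, g (x + b + (k:ℝ) * b)) / (N:ℝ))
      = fun N : ℕ => (∑ k ∈ Finset.range N, g (x + (k:ℝ) * b)) / (N:ℝ)
        + (g (x + (N:ℝ) * b) - g x) / (N:ℝ) := funext key
  rw [this]
  exact ulim_add_tendsto_zero (fun N => abs_avg_le (fun k => hb _) N)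
    (squeeze_zero_norm (fun N => by
        have : |(g (x + (N:ℝ) * b) - g x) / (N:ℝ)| ≤ (2*M) / (N:ℝ) := by
          rcases Nat.eq_zero_or_pos N with h | h
          · subst h; simp
          · have hN : (0:ℝ) < N := by exact_mod_cast h
            rw [abs_div, abs_of_pos hN, div_le_div_iff_of_pos_right hN]
            calc |g (x + (N:ℝ) * b) - g x| ≤ |g (x + (N:ℝ)*b)| + |g x| := abs_sub _ _
              _ ≤ M + M := add_le_add (hb _) (hb _)
              _ = 2*M := by ring
        rw [Real.norm_eq_abs]; exact this)
      (tendsto_const_div_atTop_nhds_zero_nat (2*M)))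

/-- The mean along `b` of a `b`-periodic function is the function itself. -/
lemma mean_eq_self {b : ℝ} {g : ℝ → ℝ} (hper : Function.Periodic g b) (x : ℝ) :
    mean b g x = g x := by
  have hval : ∀ k : ℕ, g (x + (k:ℝ) * b) = g x := by
    intro k
    induction k with
    | zero => simp
    | succ n ih => push_cast; rw [add_mul, one_mul, ← add_assoc, hper, ih]
  have hev : (fun N : ℕ => (∑ k ∈ Finset.range N, g (x + (k:ℝ) * b)) / (N:ℝ))
      =ᶠ[Filter.atTop] (fun _ => g x) := by
    filter_upwards [Filter.eventually_ge_atTop 1] with N hN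
    rw [Finset.sum_congr rfl (fun k _ => hval k), Finset.sum_const, Finset.card_range]
    have hN' : (N:ℝ) ≠ 0 := by positivity
    field_simp
    rw [nsmul_eq_mul]
  exact ulim_of_tendsto (tendsto_const_nhds.congr' hev.symm)

/-- The mean along `b` preserves `a`-periodicity. -/
lemma mean_periodic_preserve {b a : ℝ} {g : ℝ → ℝ} (hper : Function.Periodic g a) :
    Function.Periodic (mean b g) a := by
  intro x
  unfold mean
  congr 1
  funext N
  congr 1
  refine Finset.sum_congr rfl (fun k _ => ?_)
  have : x + a + (k:ℝ)*b = (x + (k:ℝ)*b) + a := by ring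
  rw [this, hper]

lemma mean_deltaOp_comm {b : ℝ} {g : ℝ → ℝ} {M : ℝ} (hb : ∀ x, |g x| ≤ M) (γ : ℝ) (x : ℝ) :
    mean b (deltaOp γ g) x = deltaOp γ (mean b g) x := by
  have h1 : mean b (deltaOp γ g) x
      = mean b (fun y => g (y + γ)) x - mean b g x := by
    have : deltaOp γ g = fun y => g (y + γ) - g y := rfl
    rw [this, mean_sub (fun y => hb (y + γ)) hb]
  rw [h1, mean_translate]
  rfl

/-- ε-δ continuity of the mean from uniform continuity of the input. -/
lemma mean_continuous {b : ℝ} {H : ℝ → ℝ} {M : ℝ} (hb : ∀ x, |H x| ≤ M)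
    (huc : ∀ ε : ℝ, 0 < ε → ∃ δ : ℝ, 0 < δ ∧ ∀ x y : ℝ, |x - y| < δ → |H x - H y| ≤ ε) :
    Continuous (mean b H) := by
  rw [Metric.continuous_iff]
  intro x ε hε
  obtain ⟨δ, hδ, hprop⟩ := huc (ε/2) (by positivity)
  refine ⟨δ, hδ, fun y hy => ?_⟩
  have hdiff : mean b H y - mean b H x
      = ulim (fun N => (∑ k ∈ Finset.range N, (H (y + (k:ℝ)*b) - H (x + (k:ℝ)*b))) / (N:ℝ)) := by
    unfold mean
    rw [← ulim_sub (fun N => abs_avg_le (fun k => hb _) N) (fun N => abs_avg_le (fun k => hb _) N)]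
    congr 1
    funext N
    rw [← sub_div, ← Finset.sum_sub_distrib]
  have hbound : ∀ N, |(∑ k ∈ Finset.range N, (H (y + (k:ℝ)*b) - H (x + (k:ℝ)*b))) / (N:ℝ)| ≤ ε/2 := by
    intro N
    refine abs_avg_le (fun k => ?_) N
    refine hprop _ _ ?_
    have : y + (k:ℝ)*b - (x + (k:ℝ)*b) = y - x := by ring
    rw [this]
    rwa [Real.dist_eq] at hy
  have : |mean b H y - mean b H x| ≤ ε/2 := hdiff ▸ abs_ulim_le hbound
  rw [Real.dist_eq]
  linarith

/-! ### Algebra of iterated difference operators -/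

lemma deltaOp_apply (β : ℝ) (f : ℝ → ℝ) (x : ℝ) : deltaOp β f x = f (x + β) - f x := rfl

lemma DOp_translate (l : List ℝ) (f : ℝ → ℝ) (t : ℝ) :
    List.foldr deltaOp (fun y => f (y + t)) l = fun y => List.foldr deltaOp f l (y + t) := by
  induction l with
  | nil => rfl
  | cons a l ih =>
      funext y
      simp only [List.foldr_cons]
      rw [ih]
      simp only [deltaOp_apply]
      rw [show y + a + t = y + t + a by ring]

lemma DOp_comm (l : List ℝ) (β : ℝ) (f : ℝ → ℝ) :
    List.foldr deltaOp (deltaOp β f) l = deltaOp β (List.foldr deltaOp f l) := by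
  induction l with
  | nil => rfl
  | cons a l ih =>
      funext x
      simp only [List.foldr_cons]
      rw [ih]
      simp only [deltaOp_apply]
      rw [show x + a + β = x + β + a by ring]
      ring

lemma DOp_sub (l : List ℝ) (f g : ℝ → ℝ) :
    List.foldr deltaOp (fun y => f y - g y) l
      = fun y => List.foldr deltaOp f l y - List.foldr deltaOp g l y := by
  induction l with
  | nil => rfl
  | cons a l ih =>
      funext x
      simp only [List.foldr_cons]
      rw [ih]
      simp only [deltaOp_apply]
      ring

lemma DOp_sum {ι : Type*} (l : List ℝ) (s : Finset ι) (w : ι → ℝ → ℝ) :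
    List.foldr deltaOp (fun x => ∑ i ∈ s, w i x) l
      = fun x => ∑ i ∈ s, List.foldr deltaOp (w i) l x := by
  induction l with
  | nil => rfl
  | cons a l ih =>
      funext x
      simp only [List.foldr_cons]
      rw [ih]
      simp only [deltaOp_apply, ← Finset.sum_sub_distrib]

lemma DOp_smul (l : List ℝ) (c : ℝ) (f : ℝ → ℝ) :
    List.foldr deltaOp (fun x => c * f x) l = fun x => c * List.foldr deltaOp f l x := by
  induction l with
  | nil => rfl
  | cons a l ih =>
      funext x
      simp only [List.foldr_cons]
      rw [ih]
      simp only [deltaOp_apply]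
      ring

lemma DOp_continuous (l : List ℝ) {f : ℝ → ℝ} (hf : Continuous f) :
    Continuous (List.foldr deltaOp f l) := by
  induction l with
  | nil => exact hf
  | cons a l ih =>
      show Continuous (deltaOp a (List.foldr deltaOp f l))
      exact (ih.comp (continuous_id.add continuous_const)).sub ih

lemma DOp_bdd (l : List ℝ) {f : ℝ → ℝ} (hf : ∃ M, ∀ x, |f x| ≤ M) :
    ∃ M, ∀ x, |List.foldr deltaOp f l x| ≤ M := by
  induction l with
  | nil => exact hf
  | cons a l ih =>
      obtain ⟨M, hM⟩ := ih
      exact ⟨2*M, fun x => by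
        show |List.foldr deltaOp f l (x + a) - List.foldr deltaOp f l x| ≤ 2*M
        calc |List.foldr deltaOp f l (x + a) - List.foldr deltaOp f l x|
            ≤ |List.foldr deltaOp f l (x + a)| + |List.foldr deltaOp f l x| := abs_sub _ _
          _ ≤ M + M := add_le_add (hM _) (hM _)
          _ = 2*M := by ring⟩

lemma DOp_periodic (l : List ℝ) {f : ℝ → ℝ} {a : ℝ} (hf : Function.Periodic f a) :
    Function.Periodic (List.foldr deltaOp f l) a := by
  induction l with
  | nil => exact hf
  | cons b l ih =>
      intro x
      show List.foldr deltaOp f l (x + a + b) - List.foldr deltaOp f l (x + a)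
        = List.foldr deltaOp f l (x + b) - List.foldr deltaOp f l x
      rw [ih x, show x + a + b = (x + b) + a by ring, ih (x + b)]

lemma DOp_mean_comm (l : List ℝ) {b : ℝ} {g : ℝ → ℝ} (hg : ∃ M, ∀ x, |g x| ≤ M) :
    List.foldr deltaOp (mean b g) l = mean b (List.foldr deltaOp g l) := by
  induction l with
  | nil => rfl
  | cons β l ih =>
      obtain ⟨M, hM⟩ := DOp_bdd l hg
      funext x
      simp only [List.foldr_cons]
      rw [ih]
      rw [← mean_deltaOp_comm hM β x]

/-! ### Helpers about continuous periodic functions -/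

lemma periodic_abs {g : ℝ → ℝ} {a : ℝ} (h : Function.Periodic g a) :
    Function.Periodic g |a| := by
  rcases abs_choice a with h1 | h1
  · rwa [h1]
  · rw [h1]; exact h.neg

lemma periodic_reduce {g : ℝ → ℝ} {T : ℝ} (hT : 0 < T) (hp : Function.Periodic g T) (x : ℝ) :
    ∃ y, y ∈ Set.Icc 0 T ∧ g x = g y := by
  have h2 : (⌊x / T⌋ : ℝ) * T ≤ x := (le_div_iff₀ hT).mp (Int.floor_le (x / T))
  have h3 : x < ((⌊x / T⌋ : ℝ) + 1) * T := (div_lt_iff₀ hT).mp (Int.lt_floor_add_one (x / T))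
  refine ⟨x - ⌊x / T⌋ * T, ⟨by linarith, by nlinarith⟩, (hp.sub_int_mul_eq _).symm⟩

lemma bdd_of_periodic_continuous {g : ℝ → ℝ} {a : ℝ} (ha : a ≠ 0) (hc : Continuous g)
    (hp : Function.Periodic g a) : ∃ M, ∀ x, |g x| ≤ M := by
  have hT : 0 < |a| := abs_pos.2 ha
  have hpT := periodic_abs hp
  obtain ⟨M, hM⟩ := (isCompact_Icc (a := (0:ℝ)) (b := |a|)).exists_bound_of_continuousOn
    hc.continuousOn
  refine ⟨M, fun x => ?_⟩
  obtain ⟨y, hy, hxy⟩ := periodic_reduce hT hpT x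
  rw [hxy]
  simpa using hM y hy

/-- uniform continuity statement used in this development -/
def UC (g : ℝ → ℝ) : Prop :=
  ∀ ε : ℝ, 0 < ε → ∃ δ : ℝ, 0 < δ ∧ ∀ x y : ℝ, |x - y| < δ → |g x - g y| ≤ ε

lemma uc_of_periodic_continuous {g : ℝ → ℝ} {a : ℝ} (ha : a ≠ 0) (hc : Continuous g)
    (hp : Function.Periodic g a) : UC g := by
  intro ε hε
  have hT : 0 < |a| := abs_pos.2 ha
  have hpT := periodic_abs hp
  set T := |a| with hTdef
  have hucOn : UniformContinuousOn g (Set.Icc (-T) (2*T)) :=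
    (isCompact_Icc).uniformContinuousOn_of_continuous hc.continuousOn
  rw [Metric.uniformContinuousOn_iff] at hucOn
  obtain ⟨δ, hδ, hprop⟩ := hucOn ε hε
  refine ⟨min δ T, lt_min hδ hT, fun x y hxy => ?_⟩
  -- reduce x into [0, T], y goes along
  set k := ⌊x / T⌋ with hk
  have h2 : (k : ℝ) * T ≤ x := (le_div_iff₀ hT).mp (Int.floor_le (x / T))
  have h3 : x < ((k : ℝ) + 1) * T := (div_lt_iff₀ hT).mp (Int.lt_floor_add_one (x / T))
  have hx0 : x - k * T ∈ Set.Icc (0:ℝ) T := by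
    constructor
    · linarith
    · nlinarith
  have hy0 : y - k * T ∈ Set.Icc (-T) (2*T) := by
    have h1 : |x - y| < T := lt_of_lt_of_le hxy (min_le_right _ _)
    obtain ⟨hx1, hx2⟩ := hx0
    rw [abs_lt] at h1
    constructor <;> nlinarith
  have hx0' : x - k * T ∈ Set.Icc (-T) (2*T) := by
    obtain ⟨hx1, hx2⟩ := hx0
    constructor <;> nlinarith
  have hgx : g x = g (x - k * T) := (hpT.sub_int_mul_eq k).symm
  have hgy : g y = g (y - k * T) := (hpT.sub_int_mul_eq k).symm
  rw [hgx, hgy]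
  have hd : dist (x - k*T) (y - k*T) < δ := by
    rw [Real.dist_eq]
    have : x - k*T - (y - k*T) = x - y := by ring
    rw [this]
    exact lt_of_lt_of_le hxy (min_le_left _ _)
  have := hprop _ hx0' _ hy0 hd
  rw [Real.dist_eq] at this
  exact this.le

/-! ### Density of `ℤ a + ℤ β` for irrational ratio -/

lemma dense_pair {a β : ℝ} (ha : a ≠ 0) (hirr : ∀ q : ℚ, β ≠ (q : ℝ) * a) :
    Dense {x : ℝ | ∃ m n : ℤ, x = m * a + n * β} := by
  rcases AddSubgroup.dense_or_cyclic (AddSubgroup.closure {a, β}) with hd | ⟨g₀, hg₀⟩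
  · refine hd.mono ?_
    intro x hx
    rw [SetLike.mem_coe, AddSubgroup.mem_closure_pair] at hx
    obtain ⟨m, n, hmn⟩ := hx
    exact ⟨m, n, by rw [← hmn]; push_cast [zsmul_eq_mul]; ring⟩
  · exfalso
    have hmema : a ∈ AddSubgroup.closure ({a, β} : Set ℝ) :=
      AddSubgroup.subset_closure (by simp)
    have hmemb : β ∈ AddSubgroup.closure ({a, β} : Set ℝ) :=
      AddSubgroup.subset_closure (by simp)
    rw [hg₀, AddSubgroup.mem_closure_singleton] at hmema hmemb
    obtain ⟨m, hm⟩ := hmema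
    obtain ⟨n, hn⟩ := hmemb
    have hg0 : g₀ ≠ 0 := by rintro rfl; simp at hm; exact ha hm.symm
    have hmne : (m : ℝ) ≠ 0 := by
      rintro hm0
      rw [zsmul_eq_mul, hm0, zero_mul] at hm
      exact ha hm.symm
    refine hirr ((n : ℚ) / (m : ℚ)) ?_
    rw [zsmul_eq_mul] at hm hn
    push_cast
    field_simp
    rw [← hn, ← hm]
    ring

/-- A continuous function invariant under translations by a dense set of reals is constant. -/
lemma const_of_dense_invariant {g : ℝ → ℝ} (hc : Continuous g) {s : Set ℝ} (hd : Dense s)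
    (hinv : ∀ t ∈ s, g t = g 0) : ∀ x, g x = g 0 := by
  have : g = fun _ => g 0 := hc.ext_on hd continuous_const hinv
  intro x; rw [this]

/-! ### Conditionally complete sup helpers -/

lemma ciSup_sub_const {g : ℤ → ℝ} (hb : BddAbove (Set.range g)) (c : ℝ) :
    ⨆ k, (g k - c) = (⨆ k, g k) - c := by
  obtain ⟨ub, hub⟩ := hb
  have hb' : BddAbove (Set.range fun k => g k - c) := by
    refine ⟨ub - c, ?_⟩
    rintro _ ⟨k, rfl⟩
    exact sub_le_sub_right (hub ⟨k, rfl⟩) c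
  apply le_antisymm
  · exact ciSup_le (fun k => sub_le_sub_right (le_ciSup ⟨ub, hub⟩ k) c)
  · rw [sub_le_iff_le_add]
    refine ciSup_le (fun k => ?_)
    have : g k - c ≤ ⨆ k, (g k - c) := le_ciSup hb' k
    linarith

/-! ### The Gottschalk–Hedlund style lemma -/

lemma GH {a β : ℝ} (ha : a ≠ 0) (hirr : ∀ q : ℚ, β ≠ (q : ℝ) * a)
    {F D : ℝ → ℝ} (hFc : Continuous F) (hFa : Function.Periodic F a)
    {M : ℝ} (hD : ∀ x, |D x| ≤ M) (hDa : Function.Periodic D a)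
    (hΔ : ∀ x, D (x + β) - D x = F x) :
    ∃ H : ℝ → ℝ, Continuous H ∧ Function.Periodic H a ∧ (∀ x, H (x + β) - H x = F x) := by
  classical
  set S : ℤ → ℝ → ℝ := fun k x => D (x + (k : ℝ) * β) - D x with hS
  have hrec : ∀ (k : ℤ) (x : ℝ), S (k + 1) x = S k x + F (x + (k : ℝ) * β) := by
    intro k x
    simp only [hS]
    rw [← hΔ (x + (k : ℝ) * β)]
    rw [show x + ((k : ℤ) + 1 : ℤ) * β = x + (k : ℝ) * β + β by push_cast; ring]
    ring
  have hScont : ∀ k : ℤ, Continuous (S k) := by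
    intro k
    induction k using Int.induction_on with
    | zero =>
        have : S 0 = fun _ => 0 := by
          funext x; simp [hS]
        rw [this]; exact continuous_const
    | succ n ih =>
        have : S (n + 1) = fun x => S n x + F (x + (n : ℝ) * β) := funext (hrec n)
        rw [this]
        exact ih.add (hFc.comp (continuous_id.add continuous_const))
    | pred n ih =>
        have h1 := hrec (-(n : ℤ) - 1)
        have : S (-(n : ℤ) - 1) = fun x => S (-(n : ℤ)) x - F (x + ((-(n : ℤ) - 1 : ℤ) : ℝ) * β) := by
          funext x
          have := h1 x
          rw [show (-(n : ℤ) - 1 + 1 : ℤ) = -(n : ℤ) by ring] at this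
          rw [this]; push_cast; ring_nf
        rw [this]
        exact ih.sub (hFc.comp (continuous_id.add continuous_const))
  have hSbound : ∀ (k : ℤ) (x : ℝ), |S k x| ≤ 2 * M := by
    intro k x
    calc |D (x + (k:ℝ) * β) - D x| ≤ |D (x + (k:ℝ)*β)| + |D x| := abs_sub _ _
      _ ≤ M + M := add_le_add (hD _) (hD _)
      _ = 2 * M := by ring
  have hSa : ∀ (k : ℤ), Function.Periodic (S k) a := by
    intro k x
    simp only [hS]
    rw [show x + a + (k:ℝ)*β = (x + (k:ℝ)*β) + a by ring, hDa, hDa]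
  have hco : ∀ (k : ℤ) (x : ℝ), S k (x + β) = S (k + 1) x - F x := by
    intro k x
    simp only [hS]
    rw [← hΔ x]
    rw [show x + β + (k:ℝ)*β = x + ((k:ℤ) + 1 : ℤ) * β by push_cast; ring]
    ring
  have hbddS : ∀ x, BddAbove (Set.range fun k : ℤ => S k x) := by
    intro x
    exact ⟨2*M, by rintro _ ⟨k, rfl⟩; exact (abs_le.mp (hSbound k x)).2⟩
  set σ : ℝ → ℝ := fun x => ⨆ k : ℤ, S k x with hσ
  have hσ_le : ∀ x, σ x ≤ 2*M := fun x => ciSup_le (fun k => (abs_le.mp (hSbound k x)).2)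
  have hσ_ge : ∀ x, 0 ≤ σ x := by
    intro x
    have h0 : S 0 x = 0 := by simp [hS]
    have := le_ciSup (hbddS x) (0 : ℤ)
    rw [h0] at this
    exact this
  have hσco : ∀ x, σ (x + β) = σ x - F x := by
    intro x
    have h1 : (fun k : ℤ => S k (x + β)) = fun k : ℤ => S (k + 1) x - F x :=
      funext (fun k => hco k x)
    have hbdd1 : BddAbove (Set.range fun k : ℤ => S (k+1) x) := by
      refine ⟨2*M, ?_⟩; rintro _ ⟨k, rfl⟩; exact (abs_le.mp (hSbound _ x)).2
    have h2 : (⨆ k : ℤ, (S (k+1) x - F x)) = (⨆ k : ℤ, S (k+1) x) - F x :=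
      ciSup_sub_const hbdd1 (F x)
    have h3 : (⨆ k : ℤ, S (k+1) x) = ⨆ k : ℤ, S k x := by
      rw [iSup, iSup]
      congr 1
      ext y
      constructor
      · rintro ⟨k, rfl⟩; exact ⟨k + 1, rfl⟩
      · rintro ⟨k, rfl⟩; exact ⟨k - 1, by simp⟩
    show (⨆ k : ℤ, S k (x + β)) = _
    rw [show (fun k : ℤ => S k (x+β)) = fun k : ℤ => S (k+1) x - F x from h1, h2, h3]
  have hσa : Function.Periodic σ a := by
    intro x
    show (⨆ k : ℤ, S k (x + a)) = ⨆ k : ℤ, S k x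
    have : (fun k : ℤ => S k (x + a)) = fun k : ℤ => S k x := funext (fun k => hSa k x)
    rw [this]
  -- the envelope
  have hballne : ∀ (x δ : ℝ), 0 < δ → (σ '' Metric.ball x δ).Nonempty :=
    fun x δ hδ => ⟨σ x, Set.mem_image_of_mem σ (Metric.mem_ball_self hδ)⟩
  have hballbdd : ∀ (x δ : ℝ), BddAbove (σ '' Metric.ball x δ) := by
    intro x δ
    refine ⟨2*M, ?_⟩
    rintro _ ⟨y, -, rfl⟩
    exact hσ_le y
  set Φ : ℝ → ℝ → ℝ := fun x δ => sSup (σ '' Metric.ball x δ) with hΦdef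
  haveI : Nonempty {d : ℝ // 0 < d} := ⟨⟨1, one_pos⟩⟩
  set ψ : ℝ → ℝ := fun x => ⨅ δ : {d : ℝ // 0 < d}, Φ x δ.1 with hψdef
  have hσ_le_Φ : ∀ (x δ : ℝ), 0 < δ → σ x ≤ Φ x δ :=
    fun x δ hδ => le_csSup (hballbdd x δ) (Set.mem_image_of_mem σ (Metric.mem_ball_self hδ))
  have hΦbddbelow : ∀ x, BddBelow (Set.range fun δ : {d : ℝ // 0 < d} => Φ x δ.1) := by
    intro x
    refine ⟨σ x, ?_⟩
    rintro _ ⟨δ, rfl⟩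
    exact hσ_le_Φ x δ.1 δ.2
  have hψ_le_Φ : ∀ (x δ : ℝ) (hδ : 0 < δ), ψ x ≤ Φ x δ :=
    fun x δ hδ => ciInf_le (hΦbddbelow x) ⟨δ, hδ⟩
  have hσ_le_ψ : ∀ x, σ x ≤ ψ x :=
    fun x => le_ciInf (fun δ => hσ_le_Φ x δ.1 δ.2)
  have hrangeσne : (Set.range σ).Nonempty := ⟨σ 0, ⟨0, rfl⟩⟩
  have hrangeσbdd : BddAbove (Set.range σ) := ⟨2*M, by rintro _ ⟨x, rfl⟩; exact hσ_le x⟩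
  set s : ℝ := sSup (Set.range σ) with hsdef
  have hσ_le_s : ∀ x, σ x ≤ s := fun x => le_csSup hrangeσbdd ⟨x, rfl⟩
  have hΦ_le_s : ∀ (x δ : ℝ), 0 < δ → Φ x δ ≤ s :=
    fun x δ hδ => csSup_le (hballne x δ hδ) (by rintro _ ⟨y, -, rfl⟩; exact hσ_le_s y)
  have hψ_le_s : ∀ x, ψ x ≤ s :=
    fun x => le_trans (hψ_le_Φ x 1 one_pos) (hΦ_le_s x 1 one_pos)
  have hΦmono : ∀ (x δ x' δ' : ℝ), 0 < δ → Metric.ball x δ ⊆ Metric.ball x' δ' →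
      Φ x δ ≤ Φ x' δ' := by
    intro x δ x' δ' hδ hsub
    exact csSup_le_csSup (hballbdd x' δ') (hballne x δ hδ) (Set.image_mono hsub)
  -- upper semicontinuity style bound for ψ
  have hψ_usc : ∀ (x ε : ℝ), 0 < ε → ∃ δ : ℝ, 0 < δ ∧ ∀ y ∈ Metric.ball x δ, ψ y ≤ ψ x + ε := by
    intro x ε hε
    have h1 : ψ x < ψ x + ε := by linarith
    obtain ⟨⟨δ0, hδ0⟩, hΦ0⟩ := exists_lt_of_ciInf_lt
      (show (⨅ δ : {d : ℝ // 0 < d}, Φ x δ.1) < ψ x + ε by change ψ x < _; linarith)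
    refine ⟨δ0/2, by positivity, fun y hy => ?_⟩
    have hsub : Metric.ball y (δ0/2) ⊆ Metric.ball x δ0 := by
      intro z hz
      rw [Metric.mem_ball] at *
      calc dist z x ≤ dist z y + dist y x := dist_triangle _ _ _
        _ < δ0/2 + δ0/2 := add_lt_add hz hy
        _ = δ0 := by ring
    calc ψ y ≤ Φ y (δ0/2) := hψ_le_Φ y (δ0/2) (by positivity)
      _ ≤ Φ x δ0 := hΦmono y (δ0/2) x δ0 (by positivity) hsub
      _ ≤ ψ x + ε := hΦ0.le
  -- lower semicontinuity style bound for σ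
  have hσ_lsc : ∀ (x ε : ℝ), 0 < ε → ∃ δ : ℝ, 0 < δ ∧ ∀ y ∈ Metric.ball x δ, σ x - ε ≤ σ y := by
    intro x ε hε
    have h1 : σ x - ε/2 < ⨆ k : ℤ, S k x := by
      have : σ x - ε/2 < σ x := by linarith
      exact this
    obtain ⟨k, hk⟩ := exists_lt_of_lt_ciSup h1
    obtain ⟨δ, hδ, hprop⟩ := Metric.continuous_iff.mp (hScont k) x (ε/2) (by positivity)
    refine ⟨δ, hδ, fun y hy => ?_⟩
    have h2 := hprop y (Metric.mem_ball.mp hy)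
    rw [Real.dist_eq, abs_lt] at h2
    obtain ⟨h2a, h2b⟩ := h2
    have h3 : S k y ≤ σ y := le_ciSup (hbddS y) k
    have h4 : σ x - ε/2 - ε/2 < S k y := by linarith
    have h5 : σ x - ε ≤ σ x - ε/2 - ε/2 := by linarith
    exact le_trans h5 (le_of_lt (lt_of_lt_of_le h4 h3))
  -- translation invariance of the envelope
  have hΦa : ∀ (x δ : ℝ), Φ (x + a) δ = Φ x δ := by
    intro x δ
    have him : σ '' Metric.ball (x + a) δ = σ '' Metric.ball x δ := by
      ext z
      constructor
      · rintro ⟨y, hy, rfl⟩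
        refine ⟨y - a, ?_, ?_⟩
        · rw [Metric.mem_ball, Real.dist_eq] at *
          rw [show y - a - x = y - (x + a) by ring]
          exact hy
        · rw [← hσa (y - a)]; rw [sub_add_cancel]
      · rintro ⟨y, hy, rfl⟩
        refine ⟨y + a, ?_, hσa y⟩
        rw [Metric.mem_ball, Real.dist_eq] at *
        rw [show y + a - (x + a) = y - x by ring]
        exact hy
    show sSup _ = sSup _
    rw [him]
  have hψa : ∀ x, ψ (x + a) = ψ x := by
    intro x
    show (⨅ δ : {d : ℝ // 0 < d}, Φ (x+a) δ.1) = _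
    have : (fun δ : {d : ℝ // 0 < d} => Φ (x+a) δ.1) = fun δ : {d : ℝ // 0 < d} => Φ x δ.1 :=
      funext (fun δ => hΦa x δ.1)
    rw [this]
  -- cocycle equation for ψ
  have hψβ : ∀ x, ψ (x + β) = ψ x - F x := by
    intro x
    have hle : ∀ ε : ℝ, 0 < ε → ψ (x + β) ≤ ψ x - F x + ε := by
      intro ε hε
      obtain ⟨⟨δ1, hδ1⟩, hΦ1⟩ := exists_lt_of_ciInf_lt
        (show (⨅ δ : {d : ℝ // 0 < d}, Φ x δ.1) < ψ x + ε/2 by change ψ x < _; linarith)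
      obtain ⟨δ2, hδ2, hF2⟩ := Metric.continuous_iff.mp hFc x (ε/2) (by positivity)
      set δ := min δ1 δ2 with hδdef
      have hδpos : 0 < δ := lt_min hδ1 hδ2
      have hΦb : Φ (x + β) δ ≤ ψ x + ε - F x := by
        refine csSup_le (hballne _ _ hδpos) ?_
        rintro _ ⟨y, hy, rfl⟩
        have hz : y - β ∈ Metric.ball x δ := by
          rw [Metric.mem_ball, Real.dist_eq] at *
          rw [show y - β - x = y - (x + β) by ring]
          exact hy
        have h4 : σ (y - β + β) = σ (y - β) - F (y - β) := hσco (y - β)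
        rw [sub_add_cancel] at h4
        have h5 : σ (y - β) ≤ Φ x δ1 := by
          refine le_trans ?_ (le_of_eq rfl)
          exact le_csSup (hballbdd x δ1)
            (Set.mem_image_of_mem σ (Metric.ball_subset_ball (min_le_left _ _) hz))
        have h6 : |F (y - β) - F x| < ε/2 := by
          have := hF2 (y - β) (Metric.ball_subset_ball (min_le_right _ _) hz)
          rwa [Real.dist_eq] at this
        rw [abs_lt] at h6
        rw [h4]
        have : Φ x δ1 < ψ x + ε/2 := hΦ1
        linarith
      calc ψ (x + β) ≤ Φ (x + β) δ := hψ_le_Φ _ _ hδpos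
        _ ≤ ψ x - F x + ε := by linarith
    have hge : ∀ ε : ℝ, 0 < ε → ψ x ≤ ψ (x + β) + F x + ε := by
      intro ε hε
      obtain ⟨⟨δ1, hδ1⟩, hΦ1⟩ := exists_lt_of_ciInf_lt
        (show (⨅ δ : {d : ℝ // 0 < d}, Φ (x+β) δ.1) < ψ (x+β) + ε/2 by change ψ (x+β) < _; linarith)
      obtain ⟨δ2, hδ2, hF2⟩ := Metric.continuous_iff.mp hFc x (ε/2) (by positivity)
      set δ := min δ1 δ2 with hδdef
      have hδpos : 0 < δ := lt_min hδ1 hδ2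
      have hΦb : Φ x δ ≤ ψ (x + β) + F x + ε := by
        refine csSup_le (hballne _ _ hδpos) ?_
        rintro _ ⟨z, hz, rfl⟩
        have h4 : σ (z + β) = σ z - F z := hσco z
        have hzball : z + β ∈ Metric.ball (x + β) δ1 := by
          have hz' : z + β ∈ Metric.ball (x + β) δ := by
            rw [Metric.mem_ball, Real.dist_eq] at hz ⊢
            rw [show z + β - (x + β) = z - x by ring]
            exact hz
          exact Metric.ball_subset_ball (min_le_left _ _) hz'
        have h5 : σ (z + β) ≤ Φ (x+β) δ1 :=
          le_csSup (hballbdd (x+β) δ1) (Set.mem_image_of_mem σ hzball)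
        have h6 : |F z - F x| < ε/2 := by
          have := hF2 z (Metric.ball_subset_ball (min_le_right _ _) hz)
          rwa [Real.dist_eq] at this
        rw [abs_lt] at h6
        have : Φ (x+β) δ1 < ψ (x+β) + ε/2 := hΦ1
        linarith
      calc ψ x ≤ Φ x δ := hψ_le_Φ _ _ hδpos
        _ ≤ ψ (x + β) + F x + ε := hΦb
    have h1 : ψ (x + β) ≤ ψ x - F x := le_of_forall_pos_le_add hle
    have h2 : ψ x ≤ ψ (x + β) + F x := by
      have := le_of_forall_pos_le_add hge
      linarith
    linarith
  -- d is constant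
  set d : ℝ → ℝ := fun x => ψ x - σ x with hddef
  have hd0 : ∀ x, 0 ≤ d x := fun x => by
    have := hσ_le_ψ x; simp only [hddef]; linarith
  have hda : Function.Periodic d a := fun x => by
    simp only [hddef]; rw [hψa, hσa]
  have hdβ : Function.Periodic d β := fun x => by
    simp only [hddef]; rw [hψβ, hσco]; ring
  have hdG : ∀ (x : ℝ) (m n : ℤ), d (x + ((m : ℝ) * a + (n : ℝ) * β)) = d x := by
    intro x m n
    have h1 : d (x + (n:ℝ)*β + (m:ℝ)*a) = d (x + (n:ℝ)*β) := (hda.int_mul m) (x + (n:ℝ)*β)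
    have h2 : d (x + (n:ℝ)*β) = d x := (hdβ.int_mul n) x
    rw [show x + ((m:ℝ)*a + (n:ℝ)*β) = x + (n:ℝ)*β + (m:ℝ)*a by ring, h1, h2]
  have hdbdd : BddAbove (Set.range d) := by
    refine ⟨s, ?_⟩
    rintro _ ⟨x, rfl⟩
    have h1 := hψ_le_s x
    have h2 := hσ_ge x
    simp only [hddef]
    linarith
  set c : ℝ := sSup (Set.range d) with hcdef
  have hd_le_c : ∀ x, d x ≤ c := fun x => le_csSup hdbdd ⟨x, rfl⟩
  have hc_le_d : ∀ x, c ≤ d x := by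
    intro x
    by_contra hlt
    push_neg at hlt
    have hlt' : 0 < (c - d x) / 4 := div_pos (by linarith) (by norm_num)
    set ε := (c - d x) / 4 with hεdef
    have hε : 0 < ε := hlt'
    obtain ⟨_, ⟨xstar, rfl⟩, hxstar⟩ := exists_lt_of_lt_csSup (Set.range_nonempty d)
      (show c - ε < c by linarith)
    obtain ⟨δa, hδa, husc⟩ := hψ_usc x ε hε
    obtain ⟨δb, hδb, hlsc⟩ := hσ_lsc x ε hε
    set δ := min δa δb with hδdef
    have hδpos : 0 < δ := lt_min hδa hδb
    -- find a point of xstar + G in the ball around x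
    have hdense := dense_pair ha hirr
    obtain ⟨g, hgG, hgball⟩ := hdense.exists_mem_open Metric.isOpen_ball
      ⟨x - xstar, Metric.mem_ball_self hδpos⟩
    obtain ⟨m, n, rfl⟩ := hgG
    set y := xstar + ((m:ℝ)*a + (n:ℝ)*β) with hydef
    have hyball : y ∈ Metric.ball x δ := by
      rw [Metric.mem_ball, Real.dist_eq]
      rw [Metric.mem_ball, Real.dist_eq] at hgball
      rw [show y - x = (m:ℝ)*a + (n:ℝ)*β - (x - xstar) by rw [hydef]; ring]
      exact hgball
    have hdy : d y = d xstar := hdG xstar m n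
    have h1 : d y ≤ d x + 2*ε := by
      have hu := husc y (Metric.ball_subset_ball (min_le_left _ _) hyball)
      have hl := hlsc y (Metric.ball_subset_ball (min_le_right _ _) hyball)
      simp only [hddef]
      linarith
    rw [hdy] at h1
    have : c - ε < d x + 2*ε := lt_of_lt_of_le hxstar h1
    simp only [hεdef] at this
    linarith
  have hdc : ∀ x, d x = c := fun x => le_antisymm (hd_le_c x) (hc_le_d x)
  have hc0 : c = 0 := by
    rcases lt_or_ge 0 c with hc | hc
    · exfalso
      obtain ⟨_, ⟨x1, rfl⟩, hx1⟩ := exists_lt_of_lt_csSup hrangeσne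
        (show s - c < s by linarith)
      have h1 : ψ x1 = σ x1 + c := by
        have := hdc x1; simp only [hddef] at this; linarith
      have h2 := hψ_le_s x1
      linarith
    · have := hd0 0
      have := hdc 0
      linarith
  have hψσ : ∀ x, ψ x = σ x := by
    intro x
    have := hdc x
    rw [hc0] at this
    simp only [hddef] at this
    linarith
  -- σ is continuous
  have hσcont : Continuous σ := by
    rw [Metric.continuous_iff]
    intro x ε hε
    obtain ⟨δa, hδa, husc⟩ := hψ_usc x (ε/4) (by positivity)
    obtain ⟨δb, hδb, hlsc⟩ := hσ_lsc x (ε/4) (by positivity)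
    refine ⟨min δa δb, lt_min hδa hδb, fun y hy => ?_⟩
    have hu := husc y (Metric.ball_subset_ball (min_le_left _ _) hy)
    have hl := hlsc y (Metric.ball_subset_ball (min_le_right _ _) hy)
    rw [hψσ, hψσ] at hu
    rw [Real.dist_eq, abs_lt]
    constructor <;> linarith
  refine ⟨fun x => -σ x, hσcont.neg, fun x => by simp only; rw [hσa x], fun x => ?_⟩
  show -σ (x + β) - (-σ x) = F x
  have := hσco x
  linarith
/-! ### The solver: continuous periodic solutions on the circle -/

lemma solver (a : ℝ) (ha : a ≠ 0) :
    ∀ (m : List ℝ) (F u : ℝ → ℝ), Continuous F → Function.Periodic F a →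
      (∃ M, ∀ x, |u x| ≤ M) → Function.Periodic u a →
      List.foldr deltaOp u m = F →
      ∃ g : ℝ → ℝ, Continuous g ∧ Function.Periodic g a ∧ List.foldr deltaOp g m = F := by
  intro m
  induction m with
  | nil =>
      intro F u hFc hFa _ _ hcert
      exact ⟨F, hFc, hFa, rfl⟩
  | cons β m' ih =>
      intro F u hFc hFa hub hua hcert
      obtain ⟨Mu, hMu⟩ := hub
      have hMu' : ∃ M, ∀ x, |u x| ≤ M := ⟨Mu, hMu⟩
      set D' := List.foldr deltaOp u m' with hD'def
      have hcert' : deltaOp β D' = F := hcert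
      have hD'a : Function.Periodic D' a := DOp_periodic m' hua
      have hΔD : ∀ x, D' (x + β) - D' x = F x := fun x => congrFun hcert' x
      by_cases hrat : ∃ q : ℚ, β = (q : ℝ) * a
      · -- rational case
        obtain ⟨q, hq⟩ := hrat
        set p : ℕ := q.den with hpdef
        have hp : 0 < p := q.pos
        have hpR : ((p : ℕ) : ℝ) ≠ 0 := by positivity
        have hpβ : (p : ℝ) * β = (q.num : ℝ) * a := by
          rw [hq]
          have h1 : ((p : ℕ) : ℚ) * q = (q.num : ℚ) := by
            rw [hpdef]
            exact Rat.den_mul_eq_num q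
          have h2 : (((p : ℕ) : ℚ) * q : ℚ) = ((q.num : ℚ) : ℚ) := h1
          calc (p : ℝ) * ((q : ℝ) * a) = (((p : ℕ) : ℚ) * q : ℚ) * a := by push_cast; ring
            _ = (q.num : ℝ) * a := by rw [h2]; push_cast; ring
        -- certificate for the IH
        have hcertIH : List.foldr deltaOp (deltaOp β u) m' = F := by
          rw [DOp_comm]; exact hcert'
        have hbump : ∃ M, ∀ x, |deltaOp β u x| ≤ M := ⟨2*Mu, fun x => by
          rw [deltaOp_apply]
          calc |u (x + β) - u x| ≤ |u (x+β)| + |u x| := abs_sub _ _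
            _ ≤ Mu + Mu := add_le_add (hMu _) (hMu _)
            _ = 2*Mu := by ring⟩
        have huaper : Function.Periodic (deltaOp β u) a := fun x => by
          simp only [deltaOp_apply]
          rw [show x + a + β = (x + β) + a by ring, hua (x+β), hua x]
        obtain ⟨h, hhc, hha, hhf⟩ := ih F (deltaOp β u) hFc hFa hbump huaper hcertIH
        -- E F = 0 (telescoping)
        have htel : ∀ (x : ℝ) (n : ℕ), ∑ k ∈ Finset.range n, F (x + (k:ℝ)*β)
            = D' (x + (n:ℝ)*β) - D' x := by
          intro x n
          induction n with
          | zero => simp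
          | succ n ihn =>
              rw [Finset.sum_range_succ, ihn]
              have h0 := hΔD (x + (n:ℝ)*β)
              rw [show x + (n:ℝ)*β + β = x + ((n+1 : ℕ):ℝ)*β by push_cast; ring] at h0
              linarith
        have hEF : ∀ x, ∑ k ∈ Finset.range p, F (x + (k : ℝ) * β) = 0 := by
          intro x
          rw [htel x p]
          have hper : D' (x + (p:ℝ)*β) = D' x := by
            rw [show x + (p:ℝ)*β = x + (q.num : ℝ) * a by rw [← hpβ]]
            exact (hD'a.int_mul q.num) _
          rw [hper]
          ring
        -- the solution
        refine ⟨fun x => ∑ k ∈ Finset.range p, ((k:ℝ)/(p:ℝ)) * h (x + (k:ℝ)*β), ?_, ?_, ?_⟩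
        · exact continuous_finset_sum _ (fun k _ =>
            continuous_const.mul (hhc.comp (continuous_id.add continuous_const)))
        · intro x
          refine Finset.sum_congr rfl (fun k _ => ?_)
          rw [show x + a + (k:ℝ)*β = (x + (k:ℝ)*β) + a by ring, hha]
        · -- foldr over β :: m'
          show deltaOp β (List.foldr deltaOp
            (fun x => ∑ k ∈ Finset.range p, ((k:ℝ)/(p:ℝ)) * h (x + (k:ℝ)*β)) m') = F
          have hfold : List.foldr deltaOp
              (fun x => ∑ k ∈ Finset.range p, ((k:ℝ)/(p:ℝ)) * h (x + (k:ℝ)*β)) m'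
              = fun x => ∑ k ∈ Finset.range p, ((k:ℝ)/(p:ℝ)) * F (x + (k:ℝ)*β) := by
            rw [DOp_sum m' (Finset.range p) (fun k => fun x => ((k:ℝ)/(p:ℝ)) * h (x + (k:ℝ)*β))]
            funext x
            refine Finset.sum_congr rfl (fun k _ => ?_)
            rw [DOp_smul m' ((k:ℝ)/(p:ℝ)) (fun y => h (y + (k:ℝ)*β)),
                DOp_translate m' h ((k:ℝ)*β), hhf]
          rw [hfold]
          funext x
          rw [deltaOp_apply]
          set f : ℕ → ℝ := fun k => F (x + (k:ℝ)*β) with hfdef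
          have hf1 : ∀ k : ℕ, F (x + β + (k:ℝ)*β) = f (k+1) := by
            intro k; simp only [hfdef]; congr 1; push_cast; ring
          have hfp : f p = f 0 := by
            simp only [hfdef, Nat.cast_zero]
            rw [show x + (p:ℝ)*β = (x + (0:ℝ)*β) + (q.num:ℝ)*a by rw [← hpβ]; ring]
            exact (hFa.int_mul q.num) _
          have hsum0 : ∑ k ∈ Finset.range p, f k = 0 := hEF x
          have hslide : ∀ g : ℕ → ℝ, ∑ k ∈ Finset.range p, g (k+1)
              = ∑ k ∈ Finset.range p, g k + g p - g 0 := by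
            intro g
            have h1 := Finset.sum_range_succ' g p
            have h2 := Finset.sum_range_succ g p
            linarith
          have hS1 : ∑ k ∈ Finset.range p, ((k:ℝ)/(p:ℝ)) * F (x + β + (k:ℝ)*β)
              = ∑ k ∈ Finset.range p, ((fun j : ℕ => ((j:ℝ)/(p:ℝ)) * f j) (k+1)
                  - (fun j : ℕ => (1/(p:ℝ)) * f j) (k+1)) := by
            refine Finset.sum_congr rfl (fun k _ => ?_)
            rw [hf1 k]
            simp only
            push_cast
            ring
          rw [hS1, Finset.sum_sub_distrib, hslide (fun j : ℕ => ((j:ℝ)/(p:ℝ)) * f j),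
              hslide (fun j : ℕ => (1/(p:ℝ)) * f j)]
          rw [← Finset.mul_sum]
          rw [hsum0, hfp]
          have hfin : f 0 = F x := by
            simp only [hfdef, Nat.cast_zero]; rw [show x + (0:ℝ)*β = x by ring]
          rw [← hfin]
          field_simp
          simp only [hfdef]
          ring
      · -- irrational case
        push_neg at hrat
        obtain ⟨MD, hMD⟩ := DOp_bdd m' hMu'
        obtain ⟨H, hHc, hHa, hHβ⟩ := GH ha hrat hFc hFa hMD hD'a hΔD
        obtain ⟨MH, hMH⟩ := bdd_of_periodic_continuous ha hHc hHa
        have hHuc : UC H := uc_of_periodic_continuous ha hHc hHa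
        have hQHc : Continuous (mean β H) := mean_continuous hMH hHuc
        have hQHβ : Function.Periodic (mean β H) β := mean_periodic_b hMH
        have hQHa : Function.Periodic (mean β H) a := mean_periodic_preserve hHa
        have hdense := dense_pair ha hrat
        have hQHG : ∀ t ∈ {x : ℝ | ∃ m n : ℤ, x = (m:ℝ) * a + (n:ℝ) * β},
            mean β H t = mean β H 0 := by
          rintro t ⟨mm, nn, rfl⟩
          have h1 : mean β H ((0:ℝ) + (nn:ℝ)*β + (mm:ℝ)*a) = mean β H ((0:ℝ) + (nn:ℝ)*β) :=
            (hQHa.int_mul mm) _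
          have h2 : mean β H ((0:ℝ) + (nn:ℝ)*β) = mean β H 0 := (hQHβ.int_mul nn) 0
          rw [show (mm:ℝ)*a + (nn:ℝ)*β = (0:ℝ) + (nn:ℝ)*β + (mm:ℝ)*a by ring, h1, h2]
        have hQHconst : ∀ x, mean β H x = mean β H 0 :=
          const_of_dense_invariant hQHc hdense hQHG
        set cH := mean β H 0 with hcHdef
        -- v := H - D' is β-periodic
        have hvper : Function.Periodic (fun y => H y - D' y) β := by
          intro y
          have h1 := hHβ y
          have h2 := hΔD y
          simp only
          linarith
        have hvb : ∀ y, |H y - D' y| ≤ MH + MD := fun y => by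
          calc |H y - D' y| ≤ |H y| + |D' y| := abs_sub _ _
            _ ≤ MH + MD := add_le_add (hMH _) (hMD _)
        -- mean β D' x = cH - (H x - D' x)
        have hmeanD' : ∀ x, mean β D' x = cH - (H x - D' x) := by
          intro x
          have hrep : mean β D' x = mean β (fun y => H y - (H y - D' y)) x := by
            congr 1
            funext y
            ring
          rw [hrep, mean_sub hMH hvb, mean_eq_self hvper, hQHconst x]
        -- new certificate
        set w : ℝ → ℝ := fun x => u x - mean β u x with hwdef
        have hwb : ∃ M, ∀ x, |w x| ≤ M := ⟨2*Mu, fun x => by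
          simp only [hwdef]
          calc |u x - mean β u x| ≤ |u x| + |mean β u x| := abs_sub _ _
            _ ≤ Mu + Mu := add_le_add (hMu _) (abs_mean_le hMu x)
            _ = 2*Mu := by ring⟩
        have hwa : Function.Periodic w a := fun x => by
          simp only [hwdef]
          rw [hua x, (mean_periodic_preserve hua) x]
        have hcertnew : List.foldr deltaOp w m' = fun x => H x - cH := by
          have h1 : List.foldr deltaOp w m'
              = fun x => D' x - mean β D' x := by
            have h2 : List.foldr deltaOp (fun x => u x - mean β u x) m'
                = fun x => List.foldr deltaOp u m' x - List.foldr deltaOp (mean β u) m' x :=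
              DOp_sub m' u (mean β u)
            rw [show w = fun x => u x - mean β u x from rfl, h2,
                DOp_mean_comm m' hMu']
          rw [h1]
          funext x
          rw [hmeanD' x]
          ring
        obtain ⟨g, hgc, hga, hgf⟩ := ih (fun x => H x - cH) w
          (hHc.sub continuous_const)
          (fun x => by show H (x + a) - cH = H x - cH; rw [hHa x])
          hwb hwa hcertnew
        refine ⟨g, hgc, hga, ?_⟩
        show deltaOp β (List.foldr deltaOp g m') = F
        rw [hgf]
        funext x
        rw [deltaOp_apply]
        show H (x + β) - cH - (H x - cH) = F x
        have := hHβ x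
        linarith
/-! ### Main theorem, list version -/

theorem main : ∀ (l : List ℝ) (f : ℝ → ℝ), Continuous f → (∃ M, ∀ x, |f x| ≤ M) →
    List.foldr deltaOp f l = 0 →
    ∃ g : Fin l.length → ℝ → ℝ, (∀ j, Continuous (g j)) ∧ (∀ j, ∃ M, ∀ x, |g j x| ≤ M) ∧
      (∀ j x, g j (x + l.get j) = g j x) ∧ ∀ x, f x = ∑ j, g j x := by
  intro l
  induction l with
  | nil =>
      intro f _ _ h0
      refine ⟨fun j => j.elim0, fun j => j.elim0, fun j => j.elim0, fun j => j.elim0, fun x => ?_⟩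
      have h1 : f x = 0 := congrFun h0 x
      simp [h1]
  | cons a rest ihr =>
      intro f hc hb h0
      by_cases ha : a = 0
      · subst ha
        refine ⟨Fin.cons f (fun _ _ => 0), ?_, ?_, ?_, ?_⟩
        · intro j
          refine Fin.cases ?_ (fun i => ?_) j
          · simpa using hc
          · simp only [Fin.cons_succ]
            exact continuous_const
        · intro j
          refine Fin.cases ?_ (fun i => ?_) j
          · simpa using hb
          · exact ⟨0, fun x => by simp [Fin.cons_succ]⟩
        · intro j
          refine Fin.cases ?_ (fun i => ?_) j
          · intro x; simp
          · intro x; simp [Fin.cons_succ]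
        · intro x
          simp only [List.length_cons]
          rw [Fin.sum_univ_succ]
          simp [Fin.cons_succ, Fin.cons_zero]
      · -- a ≠ 0
        set F := List.foldr deltaOp f rest with hFdef
        have hFc : Continuous F := DOp_continuous rest hc
        have hFper : Function.Periodic F a := by
          intro x
          have h1 : deltaOp a F x = 0 := congrFun h0 x
          rw [deltaOp_apply] at h1
          linarith
        obtain ⟨Mf, hMf⟩ := hb
        have hub : ∃ M, ∀ x, |mean a f x| ≤ M := ⟨Mf, fun x => abs_mean_le hMf x⟩
        have hua : Function.Periodic (mean a f) a := mean_periodic_b hMf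
        have hcert : List.foldr deltaOp (mean a f) rest = F := by
          rw [DOp_mean_comm rest ⟨Mf, hMf⟩]
          funext x
          exact mean_eq_self hFper x
        obtain ⟨g1, hg1c, hg1a, hg1f⟩ := solver a ha rest F (mean a f) hFc hFper hub hua hcert
        obtain ⟨Mg, hMg⟩ := bdd_of_periodic_continuous ha hg1c hg1a
        have hres : List.foldr deltaOp (fun x => f x - g1 x) rest = 0 := by
          rw [DOp_sub rest f g1, hg1f]
          funext x
          simp [hFdef]
        obtain ⟨grest, hgrc, hgrb, hgra, hgrs⟩ := ihr (fun x => f x - g1 x) (hc.sub hg1c)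
          ⟨Mf + Mg, fun x => by
            calc |f x - g1 x| ≤ |f x| + |g1 x| := abs_sub _ _
              _ ≤ Mf + Mg := add_le_add (hMf _) (hMg _)⟩ hres
        refine ⟨Fin.cons g1 grest, ?_, ?_, ?_, ?_⟩
        · intro j
          refine Fin.cases ?_ (fun i => ?_) j
          · simpa using hg1c
          · simpa [Fin.cons_succ] using hgrc i
        · intro j
          refine Fin.cases ?_ (fun i => ?_) j
          · exact ⟨Mg, by simpa using hMg⟩
          · simpa [Fin.cons_succ] using hgrb i
        · intro j
          refine Fin.cases ?_ (fun i => ?_) j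
          · intro x
            simpa using hg1a x
          · intro x
            simpa [Fin.cons_succ] using hgra i x
        · intro x
          simp only [List.length_cons]
          rw [Fin.sum_univ_succ]
          simp only [Fin.cons_zero, Fin.cons_succ]
          have := hgrs x
          linarith
end PD

theorem stmt_4 (n : ℕ) (hn : 1 ≤ n) (α : Fin n → ℝ) (f : ℝ → ℝ)
    (hbdd : ∃ C : ℝ, ∀ x, |f x| ≤ C) (hcont : Continuous f)
    (hdiff : (List.ofFn α).foldr deltaOp f = 0) :
    ∃ g : Fin n → ℝ → ℝ, (∀ j, Continuous (g j)) ∧ (∀ j, ∃ C : ℝ, ∀ x, |g j x| ≤ C) ∧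
      (∀ j x, g j (x + α j) = g j x) ∧ ∀ x, f x = ∑ j, g j x := by
  obtain ⟨G, hGc, hGb, hGp, hGs⟩ := PD.main (List.ofFn α) f hcont hbdd hdiff
  have hlen : (List.ofFn α).length = n := List.length_ofFn
  refine ⟨fun j => G (Fin.cast hlen.symm j), fun j => hGc _, fun j => hGb _,
    fun j x => ?_, fun x => ?_⟩
  · have h1 := hGp (Fin.cast hlen.symm j) x
    have hget : (List.ofFn α).get (Fin.cast hlen.symm j) = α j := by
      rw [List.get_ofFn]
      congr 1
    rw [hget] at h1
    exact h1
  · rw [hGs x]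
    exact (Fin.sum_congr' (fun i => G i x) hlen.symm).symm
end

section
/- Let f : ℝ → ℝ be a bounded function, let α ∈ ℝ and n ∈ ℕ, n ≥ 1. If Δ_α^n f = 0 (the difference operator Δ_α applied n times to f is identically zero), then Δ_α f = 0, i.e. f is α-periodic. -/
lemma key_step (α : ℝ) (h : ℝ → ℝ) (C : ℝ) (hb : ∀ x, |h x| ≤ C)
    (hper : deltaOp α (deltaOp α h) = 0) : deltaOp α h = 0 := by
  set g := deltaOp α h with hg_def
  have hg : ∀ y, g (y + α) = g y := by
    intro y
    have := congrFun hper y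
    simp only [deltaOp, Pi.zero_apply] at this
    linarith
  funext x
  have hgk : ∀ k : ℕ, g (x + k * α) = g x := by
    intro k
    induction k with
    | zero => simp
    | succ k ih =>
      have : x + (k + 1 : ℕ) * α = x + k * α + α := by push_cast; ring
      rw [this, hg, ih]
  have hk : ∀ k : ℕ, h (x + k * α) = h x + k * g x := by
    intro k
    induction k with
    | zero => simp
    | succ k ih =>
      have e : x + (k + 1 : ℕ) * α = x + k * α + α := by push_cast; ring
      have := hgk k
      simp only [hg_def, deltaOp] at this
      rw [e]
      push_cast
      have : h (x + k * α + α) = h (x + k * α) + g x := by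
        simp only [hg_def, deltaOp] at this ⊢
        linarith
      rw [this, ih]; ring
  have hbound : ∀ k : ℕ, (k : ℝ) * |g x| ≤ 2 * C := by
    intro k
    have := hk k
    have h1 := hb (x + k * α)
    have h2 := hb x
    have : |(k : ℝ) * g x| ≤ 2 * C := by
      have : (k : ℝ) * g x = h (x + k * α) - h x := by linarith
      rw [this]
      calc |h (x + k * α) - h x| ≤ |h (x + k * α)| + |h x| := abs_sub _ _
        _ ≤ 2 * C := by linarith
    rwa [abs_mul, abs_of_nonneg (Nat.cast_nonneg k)] at this
  simp only [Pi.zero_apply]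
  by_contra hne
  have hpos : 0 < |g x| := abs_pos.mpr hne
  obtain ⟨k, hkk⟩ := exists_nat_gt (2 * C / |g x|)
  have := hbound k
  have : (k : ℝ) ≤ 2 * C / |g x| := (le_div_iff₀ hpos).mpr this
  linarith

theorem stmt_5 (f : ℝ → ℝ) (hbdd : ∃ C : ℝ, ∀ x, |f x| ≤ C) (α : ℝ)
    (n : ℕ) (hn : 1 ≤ n) (hf : (deltaOp α)^[n] f = 0) :
    ∀ x, f (x + α) = f x := by
  obtain ⟨C, hC⟩ := hbdd
  have main : ∀ n : ℕ, ∀ f : ℝ → ℝ, ∀ C : ℝ, (∀ x, |f x| ≤ C) →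
      (deltaOp α)^[n + 1] f = 0 → deltaOp α f = 0 := by
    intro n
    induction n with
    | zero => intro f C hC hf; simpa using hf
    | succ n ih =>
      intro f C hC hf
      have hf' : (deltaOp α)^[n + 1] (deltaOp α f) = 0 := by
        rw [← Function.iterate_succ_apply]; exact hf
      have hCb : ∀ x, |deltaOp α f x| ≤ 2 * C := by
        intro x
        calc |deltaOp α f x| ≤ |f (x + α)| + |f x| := abs_sub _ _
          _ ≤ 2 * C := by linarith [hC (x + α), hC x]
      have h2 : deltaOp α (deltaOp α f) = 0 := ih (deltaOp α f) (2 * C) hCb hf'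
      exact key_step α f C hC h2
  obtain ⟨m, rfl⟩ := Nat.exists_eq_add_of_le hn
  have := main m f C hC (by simpa [Nat.add_comm] using hf)
  intro x
  have := congrFun this x
  simp only [deltaOp, Pi.zero_apply] at this
  linarith
end

section
/- Let β, γ ∈ ℝ be nonzero and incommensurable (βℤ ∩ γℤ = {0}), and let g : ℝ → ℝ be continuous with Δ_β g = 0 (g is β-periodic). Then the following are equivalent: (i) there exists K > 0 such that |∑_{j=0}^{k−1} g(x + jγ)| ≤ K for all x ∈ ℝ and all k ∈ ℕ; (ii) there exists a continuous function h : ℝ → ℝ such that Δ_β h = 0 and Δ_γ h = g. -/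
open Set Function

section core
variable {X : Type*} [TopologicalSpace X] [T2Space X] [CompactSpace X] [Nonempty X]

set_option linter.unusedSectionVars false

private lemma skew_iter (T : X → X) (G : X → ℝ) :
    ∀ (n : ℕ) (x : X) (t : ℝ),
      (fun q : X × ℝ => (T q.1, q.2 + G q.1))^[n] (x, t)
        = (T^[n] x, t + ∑ j ∈ Finset.range n, G (T^[j] x)) := by
  intro n
  induction n with
  | zero => intro x t; simp
  | succ n ih =>
    intro x t
    rw [Function.iterate_succ_apply', ih x t, Function.iterate_succ_apply']
    simp [Finset.sum_range_succ, add_assoc]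

/-- Gottschalk–Hedlund. -/
theorem gottschalk_hedlund (T : X → X) (hT : Continuous T)
    (hmin : ∀ x : X, Dense (range fun n : ℕ => T^[n] x))
    (G : X → ℝ) (hG : Continuous G) (K : ℝ)
    (hK : ∀ (x : X) (k : ℕ), |∑ j ∈ Finset.range k, G (T^[j] x)| ≤ K) :
    ∃ H : X → ℝ, Continuous H ∧ ∀ x, H (T x) = H x + G x := by
  classical
  set F : X × ℝ → X × ℝ := fun q => (T q.1, q.2 + G q.1) with hF
  have hFc : Continuous F := by continuity
  -- the big compact slab
  have slab : IsCompact (univ ×ˢ Icc (-K) K : Set (X × ℝ)) :=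
    isCompact_univ.prod isCompact_Icc
  -- family of candidate sets
  set S : Set (Set (X × ℝ)) :=
    {M | M.Nonempty ∧ IsCompact M ∧ MapsTo F M M ∧ M ⊆ univ ×ˢ Icc (-K) K} with hS
  -- orbit closures of points in the slab belong to S
  have orbmem : ∀ z : X × ℝ, z ∈ (univ ×ˢ Icc (-K) K : Set (X × ℝ)) → z.2 = 0 →
      closure (range fun n : ℕ => F^[n] z) ∈ S := by
    intro z hz hz2
    have hsub : (range fun n : ℕ => F^[n] z) ⊆ univ ×ˢ Icc (-K) K := by
      rintro _ ⟨n, rfl⟩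
      obtain ⟨x, t⟩ := z
      show F^[n] (x, t) ∈ _
      rw [hF, skew_iter]
      refine ⟨mem_univ _, ?_⟩
      simp only at hz2; subst hz2
      rw [zero_add]
      exact abs_le.mp (hK x n)
    have hclsub : closure (range fun n : ℕ => F^[n] z) ⊆ univ ×ˢ Icc (-K) K :=
      closure_minimal hsub (slab.isClosed)
    refine ⟨⟨z, subset_closure ⟨0, rfl⟩⟩, slab.of_isClosed_subset isClosed_closure hclsub, ?_, hclsub⟩
    -- invariance
    intro w hw
    have : F '' closure (range fun n : ℕ => F^[n] z)
        ⊆ closure (F '' range fun n : ℕ => F^[n] z) := image_closure_subset_closure_image hFc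
    have h2 : (F '' range fun n : ℕ => F^[n] z) ⊆ range fun n : ℕ => F^[n] z := by
      rintro _ ⟨_, ⟨n, rfl⟩, rfl⟩
      exact ⟨n + 1, by simp [Function.iterate_succ_apply' F n z]⟩

    exact closure_mono h2 (this ⟨w, hw, rfl⟩)
  -- base orbit closure
  have h0K : 0 ≤ K := by simpa using hK (Classical.arbitrary X) 0
  set z₀ : X × ℝ := (Classical.arbitrary X, 0) with hz₀
  have hY₀ : closure (range fun n : ℕ => F^[n] z₀) ∈ S :=
    orbmem z₀ ⟨mem_univ _, neg_nonpos.mpr h0K, h0K⟩ rfl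
  -- Zorn: a minimal element of S below Y₀
  obtain ⟨M, -, hMmin⟩ :
      ∃ M, M ⊆ closure (range fun n : ℕ => F^[n] z₀) ∧ Minimal (· ∈ S) M := by
    refine zorn_superset_nonempty S ?_ _ hY₀
    intro c hcS hc hcne
    haveI : Nonempty c := hcne.to_subtype
    refine ⟨⋂₀ c, ⟨?_, ?_, ?_, ?_⟩, fun s hs => sInter_subset_of_mem hs⟩
    · have hdir : DirectedOn (· ⊇ ·) c := by
        intro U hU V hV
        rcases eq_or_ne U V with rfl | hne
        · exact ⟨U, hU, Subset.rfl, Subset.rfl⟩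
        · rcases hc hU hV hne with h | h
          · exact ⟨U, hU, Subset.rfl, h⟩
          · exact ⟨V, hV, h, Subset.rfl⟩
      exact IsCompact.nonempty_sInter_of_directed_nonempty_isCompact_isClosed
        hdir (fun U hU => (hcS hU).1) (fun U hU => (hcS hU).2.1)
        (fun U hU => (hcS hU).2.1.isClosed)
    · obtain ⟨U, hU⟩ := hcne
      exact ((hcS hU).2.1.of_isClosed_subset
        (isClosed_sInter fun V hV => (hcS hV).2.1.isClosed) (sInter_subset_of_mem hU))
    · intro w hw
      exact fun V hV => (hcS hV).2.2.1 (hw V hV)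
    · obtain ⟨U, hU⟩ := hcne
      exact (sInter_subset_of_mem hU).trans (hcS hU).2.2.2
  obtain ⟨hMne, hMcomp, hMinv, hMslab⟩ := hMmin.prop
  -- orbit closures of points of M recover M
  have horb : ∀ z ∈ M, closure (range fun n : ℕ => F^[n] z) = M := by
    intro z hz
    have hsub : (range fun n : ℕ => F^[n] z) ⊆ M := by
      rintro _ ⟨n, rfl⟩
      induction n with
      | zero => exact hz
      | succ n ih => simpa [Function.iterate_succ_apply'] using hMinv ih
    have hclsub : closure (range fun n : ℕ => F^[n] z) ⊆ M :=
      closure_minimal hsub hMcomp.isClosed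
    have : closure (range fun n : ℕ => F^[n] z) ∈ S := by
      refine ⟨⟨z, subset_closure ⟨0, rfl⟩⟩,
        hMcomp.of_isClosed_subset isClosed_closure hclsub, ?_, hclsub.trans hMslab⟩
      intro w hw
      have h1 : F '' closure (range fun n : ℕ => F^[n] z)
          ⊆ closure (F '' range fun n : ℕ => F^[n] z) := image_closure_subset_closure_image hFc
      have h2 : (F '' range fun n : ℕ => F^[n] z) ⊆ range fun n : ℕ => F^[n] z := by
        rintro _ ⟨_, ⟨n, rfl⟩, rfl⟩
        exact ⟨n + 1, by simp [Function.iterate_succ_apply' F n z]⟩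
      exact closure_mono h2 (h1 ⟨w, hw, rfl⟩)
    exact (hMmin.eq_of_superset this hclsub).symm
  -- M is a graph: vertical uniqueness
  have hgraph : ∀ x t₁ t₂, (x, t₁) ∈ M → (x, t₂) ∈ M → t₁ = t₂ := by
    intro x t₁ t₂ h₁ h₂
    by_contra hne
    set d : ℝ := t₂ - t₁ with hd
    have hd0 : d ≠ 0 := sub_ne_zero.mpr (Ne.symm hne)
    -- the vertical translation homeomorphism
    set τ : X × ℝ ≃ₜ X × ℝ := (Homeomorph.refl X).prodCongr (Homeomorph.addRight d) with hτ
    have hτM : τ '' M = M := by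
      have key : ∀ (s : ℝ), τ '' closure (range fun n : ℕ => F^[n] (x, s))
          = closure (range fun n : ℕ => F^[n] (x, s + d)) := by
        intro s
        rw [Homeomorph.image_closure]
        have himg : τ '' (range fun n : ℕ => F^[n] (x, s))
            = range fun n : ℕ => F^[n] (x, s + d) := by
          ext w
          constructor
          · rintro ⟨_, ⟨n, rfl⟩, rfl⟩
            refine ⟨n, ?_⟩
            show F^[n] (x, s + d) = τ (F^[n] (x, s))
            rw [hF, skew_iter, skew_iter]
            simp [hτ]
            ring
          · rintro ⟨n, rfl⟩
            refine ⟨F^[n] (x, s), ⟨n, rfl⟩, ?_⟩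
            show τ (F^[n] (x, s)) = F^[n] (x, s + d)
            rw [hF, skew_iter, skew_iter]
            simp [hτ]
            ring
        rw [himg]
      calc τ '' M = τ '' closure (range fun n : ℕ => F^[n] (x, t₁)) := by rw [horb _ h₁]
        _ = closure (range fun n : ℕ => F^[n] (x, t₁ + d)) := key t₁
        _ = M := by rw [hd]; rw [show t₁ + (t₂ - t₁) = t₂ by ring]; exact horb _ h₂
    -- iterate the translation
    have hiter : ∀ n : ℕ, (x, t₁ + n * d) ∈ M := by
      intro n
      induction n with
      | zero => simpa using h₁
      | succ n ih =>
        have : τ (x, t₁ + n * d) ∈ τ '' M := mem_image_of_mem _ ih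
        rw [hτM] at this
        have he : τ (x, t₁ + n * d) = (x, t₁ + (n + 1) * d) := by
          simp [hτ]; ring
        rw [he] at this
        push_cast
        exact this
    -- contradiction with boundedness
    have hbd : ∀ n : ℕ, |t₁ + n * d| ≤ K := by
      intro n
      have := hMslab (hiter n)
      exact abs_le.mpr this.2
    obtain ⟨n, hn⟩ := exists_nat_gt ((K + |t₁|) / |d|)
    have h1 : (n : ℝ) * |d| ≤ K + |t₁| := by
      have h2 := hbd n
      have h4 := abs_add_le (t₁ + (n : ℝ) * d) (-t₁)
      rw [abs_neg] at h4
      have h5 : t₁ + (n : ℝ) * d + -t₁ = (n : ℝ) * d := by ring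
      rw [h5, abs_mul, Nat.abs_cast] at h4
      linarith
    have hdpos : 0 < |d| := abs_pos.mpr hd0
    have h6 := (div_lt_iff₀ hdpos).mp hn
    linarith
  -- orbits stay in M
  have hOrbM : ∀ z ∈ M, ∀ n : ℕ, F^[n] z ∈ M := by
    intro z hz n
    induction n with
    | zero => exact hz
    | succ n ih => simpa [Function.iterate_succ_apply'] using hMinv ih
  -- the projection of M to X is everything
  have hproj : ∀ x : X, ∃ t : ℝ, (x, t) ∈ M := by
    obtain ⟨⟨x₀, t₀⟩, hz⟩ := hMne
    intro x
    have hP : IsClosed (Prod.fst '' M) := (hMcomp.image continuous_fst).isClosed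
    have hPn : ∀ n : ℕ, T^[n] x₀ ∈ Prod.fst '' M := by
      intro n
      refine ⟨F^[n] (x₀, t₀), hOrbM _ hz n, ?_⟩
      rw [hF, skew_iter]
    have hsubP : (univ : Set X) ⊆ Prod.fst '' M := by
      rw [← (hmin x₀).closure_eq]
      exact closure_minimal (range_subset_iff.mpr hPn) hP
    obtain ⟨⟨x', t⟩, hm, hx'⟩ := hsubP (mem_univ x)
    exact ⟨t, by rwa [show x' = x from hx'] at hm⟩
  choose H hH using hproj
  have hHinv : ∀ x, H (T x) = H x + G x := by
    intro x
    have h1 : (T x, H x + G x) ∈ M := hMinv (hH x)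
    exact hgraph (T x) _ _ (hH (T x)) h1
  -- continuity of H via the closed-graph / compactness argument
  haveI : CompactSpace M := isCompact_iff_compactSpace.mp hMcomp
  set e : M ≃ X :=
    { toFun := fun z => (z : X × ℝ).1
      invFun := fun x => ⟨(x, H x), hH x⟩
      left_inv := by
        rintro ⟨⟨x, t⟩, hz⟩
        exact Subtype.ext (Prod.ext rfl (hgraph x (H x) t (hH x) hz))
      right_inv := fun x => rfl } with he
  have he_cont : Continuous e := continuous_fst.comp continuous_subtype_val
  let eh : M ≃ₜ X := Continuous.homeoOfEquivCompactToT2 (f := e) he_cont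
  have hHcont : Continuous H := by
    have h1 : Continuous fun x : X => ((eh.symm x : M) : X × ℝ).2 :=
      (continuous_snd.comp continuous_subtype_val).comp eh.symm.continuous
    have h2 : ∀ x : X, ((eh.symm x : M) : X × ℝ).2 = H x := fun x => rfl
    simpa only [h2] using h1
  exact ⟨H, hHcont, hHinv⟩

end core

private lemma rot_iter {p : ℝ} (c x₀ : AddCircle p) :
    ∀ n : ℕ, (fun y => y + c)^[n] x₀ = x₀ + n • c := by
  intro n
  induction n with
  | zero => simp
  | succ n ih => rw [Function.iterate_succ_apply', ih, succ_nsmul, add_assoc]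

private lemma small_nsmul {p : ℝ} [Fact (0 < p)] (c : AddCircle p) {ε : ℝ} (hε : 0 < ε) :
    ∃ n : ℕ, 1 ≤ n ∧ ‖(n • c : AddCircle p)‖ < ε := by
  obtain ⟨z, -, φ, hφ, hconv⟩ :=
    isCompact_univ.tendsto_subseq (x := fun n : ℕ => n • c) (fun n => mem_univ _)
  rw [Metric.tendsto_atTop] at hconv
  obtain ⟨N, hN⟩ := hconv (ε / 2) (by positivity)
  refine ⟨φ (N + 1) - φ N, ?_, ?_⟩
  · have := hφ (Nat.lt_succ_self N)
    simp only [Nat.succ_eq_add_one] at this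
    omega
  · have h1 := hN N le_rfl
    have h2 := hN (N + 1) (Nat.le_succ N)
    have hle : φ N ≤ φ (N + 1) := (hφ (Nat.lt_succ_self N)).le
    have hsub : (φ (N + 1) - φ N) • c = φ (N + 1) • c - φ N • c := by
      have h3 : φ N + (φ (N + 1) - φ N) = φ (N + 1) := by omega
      have h4 := add_nsmul c (φ N) (φ (N + 1) - φ N)
      rw [h3] at h4
      rw [h4]; abel
    rw [hsub]
    calc ‖φ (N + 1) • c - φ N • c‖
        = dist (φ (N + 1) • c) (φ N • c) := (dist_eq_norm _ _).symm
      _ ≤ dist (φ (N + 1) • c) z + dist z (φ N • c) := dist_triangle _ _ _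
      _ < ε / 2 + ε / 2 := by rw [dist_comm z]; exact add_lt_add h2 h1
      _ = ε := by ring

private lemma dense_forward_orbit {p : ℝ} [Fact (0 < p)] (c : AddCircle p)
    (hd : Dense (range fun k : ℤ => k • c)) (x₀ : AddCircle p) :
    Dense (range fun n : ℕ => (fun y => y + c)^[n] x₀) := by
  have key : ∀ x : AddCircle p, ∀ ε : ℝ, 0 < ε → ∃ n : ℕ, dist (x₀ + n • c) x < ε := by
    intro x ε hε
    obtain ⟨y, hyb, k, rfl⟩ := (Metric.dense_iff.mp hd) (x - x₀) (ε / 2) (by positivity)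
    have hk : dist ((k : ℤ) • c) (x - x₀) < ε / 2 := Metric.mem_ball.mp hyb
    have base : ∀ N : ℕ, dist (x₀ + N • c) x
        ≤ dist (((N : ℤ)) • c) ((k : ℤ) • c) + ε / 2 := by
      intro N
      have h1 : dist (x₀ + N • c) x = dist (((N : ℤ)) • c) (x - x₀) := by
        rw [natCast_zsmul, dist_eq_norm, dist_eq_norm]
        congr 1
        abel
      rw [h1]
      calc dist (((N : ℤ)) • c) (x - x₀)
          ≤ dist (((N : ℤ)) • c) ((k : ℤ) • c) + dist ((k : ℤ) • c) (x - x₀) :=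
            dist_triangle _ _ _
        _ ≤ _ := by linarith
    rcases le_or_gt 0 k with hk0 | hk0
    · refine ⟨k.toNat, ?_⟩
      have h2 := base k.toNat
      rw [show ((k.toNat : ℤ)) = k by omega] at h2
      simp only [dist_self, zero_add] at h2
      linarith
    · set m : ℕ := (-k).toNat with hm
      have hm1 : 1 ≤ m := by omega
      have hmz : (m : ℤ) = -k := by omega
      obtain ⟨n₁, hn₁1, hn₁⟩ := small_nsmul c (ε := ε / (2 * m)) (by positivity)
      set N : ℕ := m * n₁ - m with hN
      have hNz : (N : ℤ) = k + (m : ℤ) * n₁ := by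
        have hle : m ≤ m * n₁ := Nat.le_mul_of_pos_right m (by omega)
        omega
      refine ⟨N, ?_⟩
      have h2 := base N
      have h3 : dist (((N : ℤ)) • c) ((k : ℤ) • c) < ε / 2 := by
        have hsz : (N : ℤ) • c - k • c = ((m : ℤ) * n₁) • c := by
          rw [show ((m : ℤ) * n₁) = (N : ℤ) - k by omega, sub_zsmul]; abel
        rw [dist_eq_norm, hsz]
        have h4 : ((m : ℤ) * n₁) • c = m • (n₁ • c) := by
          rw [show ((m : ℤ) * n₁) = (((m * n₁ : ℕ) : ℤ)) by push_cast; ring,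
            natCast_zsmul, mul_nsmul]
          rw [nsmul_left_comm]
        rw [h4]
        have h5 : ‖m • (n₁ • c)‖ ≤ (m : ℝ) * ‖n₁ • c‖ := norm_nsmul_le
        have hmpos : (0 : ℝ) < m := by exact_mod_cast hm1
        have h6 : (m : ℝ) * ‖n₁ • c‖ < (m : ℝ) * (ε / (2 * m)) :=
          (mul_lt_mul_iff_right₀ hmpos).mpr hn₁
        have h7 : (m : ℝ) * (ε / (2 * m)) = ε / 2 := by field_simp
        linarith
      linarith
  rw [Metric.dense_iff]
  intro x ε hε
  obtain ⟨n, hn⟩ := key x ε hε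
  exact ⟨x₀ + n • c, Metric.mem_ball.mpr hn, ⟨n, rot_iter c x₀ n⟩⟩

theorem stmt_6 (β γ : ℝ) (hβ : β ≠ 0) (hγ : γ ≠ 0)
    (hinc : {x : ℝ | ∃ m : ℤ, x = m * β} ∩ {x : ℝ | ∃ k : ℤ, x = k * γ} = {0})
    (g : ℝ → ℝ) (hg : Continuous g) (hper : ∀ x, g (x + β) = g x) :
    (∃ K : ℝ, 0 < K ∧ ∀ (x : ℝ) (k : ℕ),
        |∑ j ∈ Finset.range k, g (x + (j : ℝ) * γ)| ≤ K)
    ↔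
    (∃ h : ℝ → ℝ, Continuous h ∧ (∀ x, h (x + β) = h x) ∧ ∀ x, h (x + γ) - h x = g x) := by
  have hBpos : (0 : ℝ) < |β| := abs_pos.mpr hβ
  haveI : Fact ((0 : ℝ) < |β|) := ⟨hBpos⟩
  constructor
  · rintro ⟨K, hK0, hK⟩
    have hgp : Function.Periodic g |β| := by
      rcases abs_cases β with ⟨h, -⟩ | ⟨h, -⟩
      · rw [h]; exact hper
      · rw [h]; exact Function.Periodic.neg (hper : Function.Periodic g β)
    set G : AddCircle |β| → ℝ := hgp.lift with hGdef
    have hGcoe : ∀ x : ℝ, G (x : AddCircle |β|) = g x := fun x => rfl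
    have hGcont : Continuous G := by
      have hq := QuotientAddGroup.isQuotientMap_mk (AddSubgroup.zmultiples |β|)
      rw [hq.continuous_iff]
      exact hg
    set c : AddCircle |β| := ((γ : ℝ) : AddCircle |β|) with hc
    set T : AddCircle |β| → AddCircle |β| := fun y => y + c with hT
    have hTc : Continuous T := continuous_id.add continuous_const
    have hβ0 : ((β : ℝ) : AddCircle |β|) = 0 := by
      rw [show ((0 : AddCircle |β|)) = ((0 : ℝ) : AddCircle |β|) from rfl,
        QuotientAddGroup.eq_iff_sub_mem, sub_zero, AddSubgroup.mem_zmultiples_iff]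
      rcases abs_cases β with ⟨h, -⟩ | ⟨h, -⟩
      · exact ⟨1, by simp [h]⟩
      · exact ⟨-1, by simp [h]⟩
    -- density of the ℤ-orbit of c
    have hdz : Dense (range fun k : ℤ => k • c) := by
      set S : AddSubgroup ℝ := AddSubgroup.zmultiples β ⊔ AddSubgroup.zmultiples γ with hS
      have hsub : Dense (S : Set ℝ) := by
        rcases S.dense_or_cyclic with h | ⟨a, ha⟩
        · exact h
        · exfalso
          have hβm : β ∈ AddSubgroup.closure {a} := by
            rw [← ha]; exact AddSubgroup.mem_sup_left (AddSubgroup.mem_zmultiples β)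
          have hγm : γ ∈ AddSubgroup.closure {a} := by
            rw [← ha]; exact AddSubgroup.mem_sup_right (AddSubgroup.mem_zmultiples γ)
          obtain ⟨m, hm⟩ := AddSubgroup.mem_closure_singleton.mp hβm
          obtain ⟨k, hk⟩ := AddSubgroup.mem_closure_singleton.mp hγm
          have hx : (k : ℝ) * β = (m : ℝ) * γ := by
            rw [← hm, ← hk]
            push_cast [zsmul_eq_mul]
            ring
          have hmem : (k : ℝ) * β ∈
              ({x : ℝ | ∃ m : ℤ, x = m * β} ∩ {x : ℝ | ∃ k : ℤ, x = k * γ}) :=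
            ⟨⟨k, rfl⟩, ⟨m, hx⟩⟩
          rw [hinc] at hmem
          have : (k : ℝ) = 0 ∨ β = 0 := mul_eq_zero.mp hmem
          rcases this with h0 | h0
          · have hk0 : k = 0 := by exact_mod_cast h0
            rw [hk0, zero_zsmul] at hk
            exact hγ hk.symm
          · exact hβ h0
      have himg : Dense (((↑) : ℝ → AddCircle |β|) '' (S : Set ℝ)) := by
        rw [dense_iff_closure_eq]
        apply eq_univ_of_univ_subset
        intro q _
        obtain ⟨x, rfl⟩ := QuotientAddGroup.mk_surjective q
        have hx : x ∈ closure (S : Set ℝ) := by rw [hsub.closure_eq]; trivial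
        exact image_closure_subset_closure_image continuous_quotient_mk' ⟨x, hx, rfl⟩
      refine himg.mono ?_
      rintro _ ⟨x, hxS, rfl⟩
      obtain ⟨y, hy, z, hz, rfl⟩ := AddSubgroup.mem_sup.mp hxS
      obtain ⟨m, rfl⟩ := AddSubgroup.mem_zmultiples_iff.mp hy
      obtain ⟨k, rfl⟩ := AddSubgroup.mem_zmultiples_iff.mp hz
      refine ⟨k, ?_⟩
      show k • c = _
      rw [hc]
      have : ((m • β + k • γ : ℝ) : AddCircle |β|)
          = m • ((β : ℝ) : AddCircle |β|) + k • ((γ : ℝ) : AddCircle |β|) := by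
        rw [QuotientAddGroup.mk_add, QuotientAddGroup.mk_zsmul, QuotientAddGroup.mk_zsmul]
      rw [this, hβ0, smul_zero, zero_add]
    have hmin : ∀ x : AddCircle |β|, Dense (range fun n : ℕ => T^[n] x) :=
      fun x => dense_forward_orbit c hdz x
    -- bounded Birkhoff sums on the circle
    have hKc : ∀ (q : AddCircle |β|) (k : ℕ),
        |∑ j ∈ Finset.range k, G (T^[j] q)| ≤ K := by
      intro q k
      obtain ⟨x, rfl⟩ := QuotientAddGroup.mk_surjective q
      have heq : ∀ j : ℕ, G (T^[j] (x : AddCircle |β|)) = g (x + (j : ℝ) * γ) := by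
        intro j
        rw [rot_iter, hc]
        have h2 : j • (((γ : ℝ)) : AddCircle |β|) = ((((j : ℝ) * γ : ℝ)) : AddCircle |β|) := by
          rw [← QuotientAddGroup.mk_nsmul]
          congr 1
          simp [nsmul_eq_mul]
        rw [h2, ← QuotientAddGroup.mk_add, hGcoe]
      rw [Finset.sum_congr rfl fun j _ => heq j]
      exact hK x k
    obtain ⟨H, hHc, hHi⟩ := gottschalk_hedlund T hTc hmin G hGcont K hKc
    refine ⟨fun x => H ((x : ℝ) : AddCircle |β|), hHc.comp continuous_quotient_mk', ?_, ?_⟩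
    · intro x
      show H (((x + β : ℝ)) : AddCircle |β|) = H ((x : ℝ) : AddCircle |β|)
      rw [QuotientAddGroup.mk_add, hβ0, add_zero]
    · intro x
      have h1 := hHi ((x : ℝ) : AddCircle |β|)
      have h2 : T ((x : ℝ) : AddCircle |β|) = (((x + γ : ℝ)) : AddCircle |β|) := by
        rw [hT]
        show ((x : ℝ) : AddCircle |β|) + c = _
        rw [hc, QuotientAddGroup.mk_add]
      rw [h2] at h1
      show H (((x + γ : ℝ)) : AddCircle |β|) - H ((x : ℝ) : AddCircle |β|) = g x
      rw [h1, hGcoe]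
      ring
  · rintro ⟨h, hhc, hhβ, hhγ⟩
    have hhp : Function.Periodic h |β| := by
      rcases abs_cases β with ⟨hab, -⟩ | ⟨hab, -⟩
      · rw [hab]; exact hhβ
      · rw [hab]; exact Function.Periodic.neg (hhβ : Function.Periodic h β)
    obtain ⟨C, hC⟩ := (isCompact_Icc (a := (0:ℝ)) (b := |β|)).exists_bound_of_continuousOn
      hhc.continuousOn
    have hCb : ∀ x : ℝ, |h x| ≤ C := by
      intro x
      have hmem := toIcoMod_mem_Ico' hBpos x
      have h1 : h (toIcoMod hBpos 0 x) = h x := by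
        show h (x - toIcoDiv hBpos 0 x • |β|) = h x
        exact hhp.sub_zsmul_eq _
      have h2 := hC (toIcoMod hBpos 0 x) ⟨hmem.1, hmem.2.le⟩
      rw [h1] at h2
      exact h2
    have hC0 : 0 ≤ C := (abs_nonneg _).trans (hCb 0)
    refine ⟨2 * C + 1, by linarith, ?_⟩
    intro x k
    have tel : ∑ j ∈ Finset.range k, g (x + (j : ℝ) * γ) = h (x + k * γ) - h x := by
      induction k with
      | zero => simp
      | succ k ih =>
        rw [Finset.sum_range_succ, ih]
        have h3 := hhγ (x + (k : ℝ) * γ)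
        have h4 : x + ((k : ℝ) + 1) * γ = x + (k : ℝ) * γ + γ := by ring
        push_cast
        rw [h4]
        linarith
    rw [tel]
    have := hCb (x + k * γ)
    have := hCb x
    calc |h (x + k * γ) - h x| ≤ |h (x + k * γ)| + |h x| := abs_sub _ _
      _ ≤ 2 * C + 1 := by linarith
end

section
/- Let E be a real Banach space and let T₁, …, Tₙ be pairwise commuting bounded linear operators on E, each of which is mean ergodic, i.e. for every x ∈ E the Cesàro averages (1/N) ∑_{k=1}^{N} Tⱼ^k x converge in norm as N → ∞. Then ker((T₁ − I)∘⋯∘(Tₙ − I)) = ker(T₁ − I) + ⋯ + ker(Tₙ − I); that is, an element x satisfies (T₁ − I)⋯(Tₙ − I)x = 0 if and only if x = x₁ + ⋯ + xₙ with Tⱼ xⱼ = xⱼ for each j. -/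
open Filter

section Aux

variable {E : Type*} [NormedAddCommGroup E] [NormedSpace ℝ E] [CompleteSpace E]

noncomputable def stmt7avg (T : E →L[ℝ] E) (N : ℕ) (x : E) : E :=
  (N : ℝ)⁻¹ • ∑ k ∈ Finset.range N, (T ^ (k + 1)) x

lemma stmt7_avg_comm (T S : E →L[ℝ] E) (h : Commute S T) (N : ℕ) (x : E) :
    S (stmt7avg T N x) = stmt7avg T N (S x) := by
  simp only [stmt7avg, map_smul, map_sum]
  congr 1
  refine Finset.sum_congr rfl fun k _ => ?_
  have h2 : S * T ^ (k + 1) = T ^ (k + 1) * S := (h.pow_right (k + 1)).eq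
  calc S ((T ^ (k + 1)) x) = (S * T ^ (k + 1)) x := rfl
    _ = (T ^ (k + 1) * S) x := by rw [h2]
    _ = (T ^ (k + 1)) (S x) := rfl

lemma stmt7_pow_fixed (T : E →L[ℝ] E) (z : E) (h : T z = z) (m : ℕ) : (T ^ m) z = z := by
  induction m with
  | zero => simp
  | succ m ih =>
      rw [pow_succ]
      calc (T ^ m * T) z = (T ^ m) (T z) := rfl
        _ = z := by rw [h, ih]

lemma stmt7_avg_fixed (T : E →L[ℝ] E) (z : E) (h : T z = z) (N : ℕ) (hN : 1 ≤ N) :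
    stmt7avg T N z = z := by
  have hNz : (N : ℝ) ≠ 0 := Nat.cast_ne_zero.mpr (by omega)
  simp only [stmt7avg]
  have : ∑ k ∈ Finset.range N, (T ^ (k + 1)) z = N • z := by
    rw [Finset.sum_congr rfl fun k _ => stmt7_pow_fixed T z h (k + 1)]
    simp
  rw [this, ← Nat.cast_smul_eq_nsmul ℝ, smul_smul, inv_mul_cancel₀ hNz, one_smul]

lemma stmt7_key (T S : E →L[ℝ] E) (hcomm : Commute S T)
    (herg : ∀ x : E, ∃ y, Tendsto (fun N => stmt7avg T N x) atTop (nhds y))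
    (x : E) (hx : T (S x) = S x) :
    ∃ p, T p = p ∧ S x = S p := by
  obtain ⟨p, hp⟩ := herg x
  have hinv : Tendsto (fun N : ℕ => (N : ℝ)⁻¹) atTop (nhds 0) :=
    tendsto_inv_atTop_nhds_zero_nat
  refine ⟨p, ?_, ?_⟩
  · -- T p = p
    -- limit of (N:ℝ)⁻¹ • (T^(N+1)) x is 0
    have hshift : Tendsto (fun N : ℕ => stmt7avg T (N + 1) x) atTop (nhds p) :=
      hp.comp (tendsto_add_atTop_nat 1)
    have hsc : Tendsto (fun N : ℕ => (1 : ℝ) + (N : ℝ)⁻¹) atTop (nhds 1) := by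
      simpa using tendsto_const_nhds.add hinv
    have hcomb : Tendsto
        (fun N : ℕ => ((1 : ℝ) + (N : ℝ)⁻¹) • stmt7avg T (N + 1) x - stmt7avg T N x)
        atTop (nhds 0) := by
      have := (hsc.smul hshift).sub hp
      simpa using this
    have lim3 : Tendsto (fun N : ℕ => (N : ℝ)⁻¹ • (T ^ (N + 1)) x) atTop (nhds 0) := by
      refine hcomb.congr' ?_
      filter_upwards [eventually_ge_atTop 1] with N hN
      have hNz : (N : ℝ) ≠ 0 := Nat.cast_ne_zero.mpr (by omega)
      have hmul : ((1 : ℝ) + (N : ℝ)⁻¹) * (((N : ℕ) + 1 : ℕ) : ℝ)⁻¹ = (N : ℝ)⁻¹ := by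
        push_cast
        field_simp
      simp only [stmt7avg, smul_smul, hmul, Finset.sum_range_succ, smul_add]
      abel
    have lim2 : Tendsto (fun N : ℕ => (N : ℝ)⁻¹ • T x) atTop (nhds 0) := by
      simpa using hinv.smul_const (T x)
    have hTavg : ∀ N : ℕ, T (stmt7avg T N x)
        = stmt7avg T N x + (N : ℝ)⁻¹ • (T ^ (N + 1)) x - (N : ℝ)⁻¹ • T x := by
      intro N
      have hsum : ∑ k ∈ Finset.range N, (T ^ (k + 2)) x
          = (∑ k ∈ Finset.range N, (T ^ (k + 1)) x) + (T ^ (N + 1)) x - T x := by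
        have h1 := Finset.sum_range_succ' (fun k => (T ^ (k + 1)) x) N
        have h2 := Finset.sum_range_succ (fun k => (T ^ (k + 1)) x) N
        rw [h2] at h1
        simp only [zero_add, pow_one] at h1
        rw [eq_sub_iff_add_eq]
        exact h1.symm
      have hterm : ∀ k, T ((T ^ (k + 1)) x) = (T ^ (k + 2)) x := by
        intro k
        rw [show T ^ (k + 2) = T * T ^ (k + 1) from pow_succ' T (k + 1)]
        rfl
      simp only [stmt7avg, map_smul, map_sum]
      rw [Finset.sum_congr rfl fun k _ => hterm k, hsum, smul_sub, smul_add]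
    have hl : Tendsto (fun N => T (stmt7avg T N x)) atTop (nhds (T p)) :=
      (T.continuous.tendsto p).comp hp
    have hr : Tendsto (fun N => T (stmt7avg T N x)) atTop (nhds p) := by
      simp only [hTavg]
      simpa using (hp.add lim3).sub lim2
    exact tendsto_nhds_unique hl hr
  · -- S x = S p
    have h1 : Tendsto (fun N => S (stmt7avg T N x)) atTop (nhds (S p)) :=
      (S.continuous.tendsto p).comp hp
    have h2 : Tendsto (fun _ : ℕ => S x) atTop (nhds (S p)) := by
      refine h1.congr' ?_
      filter_upwards [eventually_ge_atTop 1] with N hN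
      rw [stmt7_avg_comm T S hcomm, stmt7_avg_fixed T (S x) hx N hN]
    exact (tendsto_nhds_unique tendsto_const_nhds h2)

end Aux


lemma stmt7_prod_factor {R : Type*} [Ring R] :
    ∀ (n : ℕ) (f : Fin n → R), (∀ i j, Commute (f i) (f j)) → ∀ j : Fin n,
      ∃ C : R, (List.ofFn f).prod = C * f j := by
  intro n
  induction n with
  | zero => exact fun f _ j => j.elim0
  | succ n ih =>
      intro f hf j
      rw [List.ofFn_succ, List.prod_cons]
      refine Fin.cases ?_ ?_ j
      · -- j = 0 : f 0 commutes with the rest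
        have hc : Commute ((List.ofFn fun i : Fin n => f i.succ).prod) (f 0) := by
          apply Commute.list_prod_left
          intro z hz
          obtain ⟨i, rfl⟩ := List.mem_ofFn.mp hz
          exact hf i.succ 0
        exact ⟨(List.ofFn fun i : Fin n => f i.succ).prod, by rw [← hc.eq]⟩
      · intro k
        obtain ⟨C, hC⟩ := ih (fun i => f i.succ) (fun i j => hf i.succ j.succ) k
        exact ⟨f 0 * C, by rw [hC, mul_assoc]⟩

lemma stmt7_main {E : Type*} [NormedAddCommGroup E] [NormedSpace ℝ E] [CompleteSpace E] :
    ∀ (n : ℕ) (T : Fin n → E →L[ℝ] E),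
      (∀ i j, T i * T j = T j * T i) →
      (∀ (j : Fin n) (x : E), ∃ y : E,
        Tendsto (fun N : ℕ => stmt7avg (T j) N x) atTop (nhds y)) →
      ∀ x : E, (List.ofFn fun j => T j - 1).prod x = 0 →
        ∃ y : Fin n → E, (∀ j, T j (y j) = y j) ∧ x = ∑ j, y j := by
  intro n
  induction n with
  | zero =>
      intro T _ _ x hx
      refine ⟨fun j => j.elim0, fun j => j.elim0, ?_⟩
      simpa using hx
  | succ n ih =>
      intro T hcomm herg x hx
      set S : E →L[ℝ] E := (List.ofFn fun j : Fin n => T j.succ - 1).prod with hS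
      have hprod : (List.ofFn fun j : Fin (n + 1) => T j - 1).prod = (T 0 - 1) * S := by
        rw [List.ofFn_succ, List.prod_cons]
      have hSx : T 0 (S x) = S x := by
        rw [hprod] at hx
        have : (T 0 - 1) (S x) = 0 := hx
        have h2 : T 0 (S x) - S x = 0 := by
          simpa [ContinuousLinearMap.sub_apply] using this
        exact sub_eq_zero.mp h2
      have hSTcomm : Commute S (T 0) := by
        apply Commute.list_prod_left
        intro z hz
        obtain ⟨i, rfl⟩ := List.mem_ofFn.mp hz
        exact ((show Commute (T i.succ) (T 0) from hcomm i.succ 0).sub_left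
          (Commute.one_left _))
      obtain ⟨p, hTp, hSp⟩ := stmt7_key (T 0) S hSTcomm (herg 0) x hSx
      have hSxp : S (x - p) = 0 := by rw [map_sub, hSp, sub_self]
      obtain ⟨y', hy', hsum⟩ := ih (fun j => T j.succ)
        (fun i j => hcomm i.succ j.succ) (fun j => herg j.succ) (x - p) hSxp
      refine ⟨Fin.cons p y', ?_, ?_⟩
      · refine Fin.cases ?_ ?_
        · simpa using hTp
        · intro k; simpa using hy' k
      · rw [Fin.sum_cons, ← hsum]
        abel

theorem stmt_7 {E : Type*} [NormedAddCommGroup E] [NormedSpace ℝ E] [CompleteSpace E]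
    (n : ℕ) (T : Fin n → E →L[ℝ] E)
    (hcomm : ∀ i j, T i * T j = T j * T i)
    (herg : ∀ (j : Fin n) (x : E), ∃ y : E,
      Tendsto (fun N : ℕ => (N : ℝ)⁻¹ • ∑ k ∈ Finset.range N, (T j ^ (k + 1)) x)
        atTop (nhds y))
    (x : E) :
    ((List.ofFn fun j => T j - 1).prod x = 0 ↔
      ∃ y : Fin n → E, (∀ j, T j (y j) = y j) ∧ x = ∑ j, y j) := by
  constructor
  · exact stmt7_main n T hcomm herg x
  · rintro ⟨y, hy, rfl⟩
    rw [map_sum]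
    refine Finset.sum_eq_zero fun j _ => ?_
    obtain ⟨C, hC⟩ := stmt7_prod_factor n (fun j => T j - 1)
      (fun i j => ((show Commute (T i) (T j) from hcomm i j).sub_left
        (Commute.one_left _)).sub_right (Commute.one_right _)) j
    rw [hC]
    have : (T j - 1) (y j) = 0 := by
      simp [ContinuousLinearMap.sub_apply, hy j]
    calc (C * (T j - 1)) (y j) = C ((T j - 1) (y j)) := rfl
      _ = 0 := by rw [this, map_zero]
end

section
/- Let E be a reflexive real Banach space and let T₁, …, Tₙ be pairwise commuting bounded linear operators on E, each power bounded, i.e. for each j there is Cⱼ with ‖Tⱼ^k‖ ≤ Cⱼ for all k ∈ ℕ. Then ker((T₁ − I)∘⋯∘(Tₙ − I)) = ker(T₁ − I) + ⋯ + ker(Tₙ − I). -/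
open Filter Topology NormedSpace

private lemma clusterPt_eq_of_tendsto' {α : Type*} [TopologicalSpace α] [T2Space α]
    {u : ℕ → α} {a b : α} (h : MapClusterPt a Filter.atTop u)
    (h2 : Filter.Tendsto u Filter.atTop (𝓝 b)) : a = b :=
  eq_of_nhds_neBot (h.clusterPt.mono h2)

private lemma mean_ergodic_key {E : Type*} [NormedAddCommGroup E] [NormedSpace ℝ E]
    (hrefl : Function.Surjective (NormedSpace.inclusionInDoubleDual ℝ E))
    (S : E →L[ℝ] E) (C : ℝ) (hC : ∀ k : ℕ, ‖S ^ k‖ ≤ C) (x : E) :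
    ∃ y : E, S y = y ∧
      ∀ Q : E →L[ℝ] E, Q * S = S * Q → S (Q x) = Q x → Q y = Q x := by
  classical
  set a : ℕ → E := fun k => (k : ℝ)⁻¹ • ∑ i ∈ Finset.range k, (S ^ i) x with ha
  have hCnn : (0 : ℝ) ≤ C := le_trans (norm_nonneg _) (hC 0)
  have hbound : ∀ k, ‖a k‖ ≤ C * ‖x‖ := by
    intro k
    rcases Nat.eq_zero_or_pos k with rfl | hk
    · have : a 0 = 0 := by simp [ha]
      rw [this, norm_zero]
      positivity
    · have h1 : ‖∑ i ∈ Finset.range k, (S ^ i) x‖ ≤ (k : ℝ) * (C * ‖x‖) := by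
        calc ‖∑ i ∈ Finset.range k, (S ^ i) x‖ ≤ ∑ i ∈ Finset.range k, ‖(S ^ i) x‖ :=
              norm_sum_le _ _
          _ ≤ ∑ i ∈ Finset.range k, C * ‖x‖ := by
              refine Finset.sum_le_sum fun i _ => ?_
              exact le_trans ((S ^ i).le_opNorm x)
                (mul_le_mul_of_nonneg_right (hC i) (norm_nonneg x))
          _ = (k : ℝ) * (C * ‖x‖) := by simp [mul_comm]
      have hkpos : (0 : ℝ) < (k : ℝ) := by exact_mod_cast hk
      calc ‖a k‖ = (k : ℝ)⁻¹ * ‖∑ i ∈ Finset.range k, (S ^ i) x‖ := by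
            simp [ha, norm_smul, abs_of_nonneg (le_of_lt (inv_pos.mpr hkpos))]
        _ ≤ (k : ℝ)⁻¹ * ((k : ℝ) * (C * ‖x‖)) :=
            mul_le_mul_of_nonneg_left h1 (le_of_lt (inv_pos.mpr hkpos))
        _ = C * ‖x‖ := by field_simp
  set J := NormedSpace.inclusionInDoubleDual ℝ E with hJ
  set u : ℕ → WeakDual ℝ (StrongDual ℝ E) := fun k => StrongDual.toWeakDual (J (a k)) with hu
  have hmem : ∀ k, u k ∈ (WeakDual.toStrongDual ⁻¹'
      Metric.closedBall (0 : StrongDual ℝ (StrongDual ℝ E)) (C * ‖x‖)) := by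
    intro k
    simp only [Set.mem_preimage, Metric.mem_closedBall, dist_zero_right]
    exact (dist_zero_right (J (a k) : StrongDual ℝ (StrongDual ℝ E))).le.trans (le_trans (NormedSpace.double_dual_bound ℝ E (a k)) (hbound k))
  have hle : Filter.map u Filter.atTop ≤ Filter.principal (WeakDual.toStrongDual ⁻¹'
      Metric.closedBall (0 : StrongDual ℝ (StrongDual ℝ E)) (C * ‖x‖)) :=
    Filter.le_principal_iff.2 (Filter.mem_map.2 (Filter.Eventually.of_forall hmem))
  obtain ⟨ξ, -, hξ⟩ :=
    (WeakDual.isCompact_closedBall (𝕜 := ℝ) (E := StrongDual ℝ E) 0 (C * ‖x‖)).exists_mapClusterPt hle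
  obtain ⟨y, hy⟩ := hrefl (WeakDual.toStrongDual ξ)
  have key : ∀ g : StrongDual ℝ E, MapClusterPt (g y) Filter.atTop fun k => g (a k) := by
    intro g
    have hcont : Continuous fun ζ : WeakDual ℝ (StrongDual ℝ E) => ζ g :=
      WeakDual.eval_continuous g
    have hmc := hξ.continuousAt_comp hcont.continuousAt
    have heq : ((fun ζ : WeakDual ℝ (StrongDual ℝ E) => ζ g) ∘ u) = fun k => g (a k) := by
      funext k; rfl
    rw [heq] at hmc
    have hξg : ξ g = g y := by
      have h1 : (J y) g = (WeakDual.toStrongDual ξ) g := by rw [hy]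
      simpa [hJ, NormedSpace.dual_def] using h1.symm
    rwa [hξg] at hmc
  refine ⟨y, ?_, ?_⟩
  · -- S y = y
    have hgoal : ∀ g : StrongDual ℝ E, g (S y - y) = 0 := by
      intro g
      have hform : ∀ k : ℕ, (S - 1) (a k) = (k : ℝ)⁻¹ • ((S ^ k) x - x) := by
        intro k
        have hS : S (a k) = (k : ℝ)⁻¹ • ∑ i ∈ Finset.range k, (S ^ (i + 1)) x := by
          simp only [ha, map_smul, map_sum]
          congr 1
          refine Finset.sum_congr rfl fun i _ => ?_
          rw [pow_succ']
          rfl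
        have htel : (∑ i ∈ Finset.range k, (S ^ (i + 1)) x)
            - ∑ i ∈ Finset.range k, (S ^ i) x = (S ^ k) x - x := by
          rw [← Finset.sum_sub_distrib]
          simpa using Finset.sum_range_sub (fun i => (S ^ i) x) k
        simp only [ContinuousLinearMap.sub_apply, ContinuousLinearMap.one_apply, hS]
        simp only [ha]
        rw [← smul_sub, htel]
      have hnorm : ∀ k : ℕ, ‖(S - 1) (a k)‖ ≤ ((C + 1) * ‖x‖) / k := by
        intro k
        rcases Nat.eq_zero_or_pos k with rfl | hk
        · simp [hform]
        · have hkpos : (0 : ℝ) < (k : ℝ) := by exact_mod_cast hk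
          rw [hform, norm_smul, div_eq_inv_mul]
          gcongr
          · simp [abs_of_nonneg (le_of_lt (inv_pos.mpr hkpos))]
          · calc ‖(S ^ k) x - x‖ ≤ ‖(S ^ k) x‖ + ‖x‖ := norm_sub_le _ _
              _ ≤ C * ‖x‖ + 1 * ‖x‖ := by
                  gcongr
                  · exact le_trans ((S ^ k).le_opNorm x)
                      (mul_le_mul_of_nonneg_right (hC k) (norm_nonneg x))
                  · simp
              _ = (C + 1) * ‖x‖ := by ring
      have hz : Filter.Tendsto (fun k : ℕ => (S - 1) (a k)) Filter.atTop (𝓝 0) := by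
        rw [tendsto_zero_iff_norm_tendsto_zero]
        refine squeeze_zero (fun k => norm_nonneg _) hnorm ?_
        exact tendsto_const_div_atTop_nhds_zero_nat _
      have hzero : Filter.Tendsto (fun k => (g.comp (S - 1)) (a k)) Filter.atTop (𝓝 0) := by
        have := (g.continuous.tendsto 0).comp hz
        simpa [Function.comp_def, map_sub] using this
      have heq := clusterPt_eq_of_tendsto' (key (g.comp (S - 1))) hzero
      simpa using heq
    have h0 : S y - y = 0 :=
      NormedSpace.eq_zero_of_forall_dual_eq_zero ℝ hgoal
    exact sub_eq_zero.mp h0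
  · -- commuting fixed part
    intro Q hQS hfixQx
    have hcomm : Commute Q S := hQS
    have hpowfix : ∀ i : ℕ, (S ^ i) (Q x) = Q x := by
      intro i
      induction i with
      | zero => simp
      | succ i ih =>
        rw [pow_succ']
        have : (S * S ^ i) (Q x) = S ((S ^ i) (Q x)) := rfl
        rw [this, ih, hfixQx]
    have hQa : ∀ k : ℕ, 1 ≤ k → Q (a k) = Q x := by
      intro k hk
      have hQpow : ∀ i : ℕ, Q ((S ^ i) x) = Q x := by
        intro i
        have hci : Q * S ^ i = S ^ i * Q := (hcomm.pow_right i).eq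
        have : Q ((S ^ i) x) = (Q * S ^ i) x := rfl
        rw [this, hci]
        have : (S ^ i * Q) x = (S ^ i) (Q x) := rfl
        rw [this, hpowfix i]
      have hkpos : (0 : ℝ) < (k : ℝ) := by exact_mod_cast hk
      calc Q (a k) = (k : ℝ)⁻¹ • ∑ i ∈ Finset.range k, Q ((S ^ i) x) := by
            simp [ha, map_smul, map_sum]
        _ = (k : ℝ)⁻¹ • ((k : ℕ) • Q x) := by
            rw [Finset.sum_congr rfl fun i _ => hQpow i, Finset.sum_const, Finset.card_range]
        _ = Q x := by
            rw [← Nat.cast_smul_eq_nsmul ℝ, smul_smul, inv_mul_cancel₀ (ne_of_gt hkpos), one_smul]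
    have hconst : Filter.Tendsto (fun k => (Q (a k))) Filter.atTop (𝓝 (Q x)) := by
      refine Filter.Tendsto.congr' ?_ tendsto_const_nhds
      filter_upwards [Filter.eventually_ge_atTop 1] with k hk
      exact (hQa k hk).symm
    have hgoal : ∀ g : StrongDual ℝ E, g (Q y) = g (Q x) := by
      intro g
      have hzero : Filter.Tendsto (fun k => (g.comp Q) (a k)) Filter.atTop (𝓝 (g (Q x))) := by
        have := (g.continuous.tendsto (Q x)).comp hconst
        simpa [Function.comp_def] using this
      have heq := clusterPt_eq_of_tendsto' (key (g.comp Q)) hzero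
      simpa using heq
    have : Q y - Q x = 0 := by
      refine NormedSpace.eq_zero_of_forall_dual_eq_zero ℝ fun g => ?_
      simp [map_sub, hgoal g]
    exact sub_eq_zero.mp this

theorem stmt_8 {E : Type*} [NormedAddCommGroup E] [NormedSpace ℝ E] [CompleteSpace E]
    (hrefl : Function.Surjective (NormedSpace.inclusionInDoubleDual ℝ E))
    (n : ℕ) (T : Fin n → E →L[ℝ] E)
    (hcomm : ∀ i j, T i * T j = T j * T i)
    (hpb : ∀ j : Fin n, ∃ C : ℝ, ∀ k : ℕ, ‖T j ^ k‖ ≤ C)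
    (x : E) :
    ((List.ofFn fun j => T j - 1).prod x = 0 ↔
      ∃ y : Fin n → E, (∀ j, T j (y j) = y j) ∧ x = ∑ j, y j) := by
  induction n generalizing x with
  | zero =>
    simp only [List.ofFn_zero, List.prod_nil, ContinuousLinearMap.one_apply]
    constructor
    · intro hx
      exact ⟨fun j => j.elim0, fun j => j.elim0, by simp [hx]⟩
    · rintro ⟨y, -, rfl⟩
      simp
  | succ n ih =>
    set R : E →L[ℝ] E := (List.ofFn fun j : Fin n => T j.succ - 1).prod with hR
    have hsplit : (List.ofFn fun j : Fin (n + 1) => T j - 1).prod = (T 0 - 1) * R := by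
      rw [List.ofFn_succ, List.prod_cons]
    have hcommR : Commute (T 0) R := by
      apply Commute.list_prod_right
      intro b hb
      rw [List.mem_ofFn] at hb
      obtain ⟨j, rfl⟩ := hb
      have hc : Commute (T 0) (T j.succ) := hcomm 0 j.succ
      exact hc.sub_right (Commute.one_right _)
    rw [hsplit]
    constructor
    · intro hx
      have hfix : T 0 (R x) = R x := by
        have h0 : ((T 0 - 1) * R) x = T 0 (R x) - R x := rfl
        rw [h0] at hx
        exact sub_eq_zero.mp hx
      obtain ⟨C0, hC0⟩ := hpb 0
      obtain ⟨y0, hy0, hQ⟩ := mean_ergodic_key hrefl (T 0) C0 hC0 x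
      have hRy : R y0 = R x := hQ R hcommR.eq.symm hfix
      have hRsub : R (x - y0) = 0 := by rw [map_sub, hRy, sub_self]
      obtain ⟨y', hy', hsum⟩ := (ih (fun j => T j.succ)
        (fun i j => hcomm i.succ j.succ) (fun j => hpb j.succ) (x - y0)).mp hRsub
      refine ⟨Fin.cases y0 y', ?_, ?_⟩
      · intro j
        refine Fin.cases ?_ ?_ j
        · simpa using hy0
        · intro i; simpa using hy' i
      · rw [Fin.sum_univ_succ]
        simp only [Fin.cases_zero, Fin.cases_succ]
        rw [← hsum]; abel
    · rintro ⟨y, hyfix, rfl⟩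
      rw [Fin.sum_univ_succ, map_add]
      have h1 : ((T 0 - 1) * R) (y 0) = 0 := by
        have hc : (T 0 - 1) * R = R * (T 0 - 1) := (hcommR.sub_left (Commute.one_left _)).eq
        rw [hc]
        have he : (R * (T 0 - 1)) (y 0) = R ((T 0 - 1) (y 0)) := rfl
        rw [he]
        have hz : (T 0 - 1) (y 0) = 0 := by
          simp [ContinuousLinearMap.sub_apply, hyfix 0]
        rw [hz, map_zero]
      have h2 : ((T 0 - 1) * R) (∑ i : Fin n, y i.succ) = 0 := by
        have hz : R (∑ i : Fin n, y i.succ) = 0 :=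
          (ih (fun j => T j.succ) (fun i j => hcomm i.succ j.succ)
            (fun j => hpb j.succ) _).mpr ⟨fun i => y i.succ, fun i => hyfix i.succ, rfl⟩
        have he : ((T 0 - 1) * R) (∑ i : Fin n, y i.succ)
            = (T 0 - 1) (R (∑ i : Fin n, y i.succ)) := rfl
        rw [he, hz, map_zero]
      rw [h1, h2, add_zero]
end
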